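/- arXiv:1405.0356 — 8 statements merged into one kernel-verified Lean document; each statement's English description precedes it below -/
import Mathlib

section
/- Let R > 0 and let (a_n), (b_n) be sequences of complex numbers such that the power series Σ_{n≥0} a_n ζ^n/n! and Σ_{n≥0} b_n ζ^n/n! both have radius of convergence ≥ R; call Φ and Ψ their sums on the disc D(0,R). Then the function Φ*Ψ(ζ) := ∫₀^1 ζ·Φ(sζ)·Ψ((1−s)ζ) ds is holomorphic on D(0,R), the power series Σ_{n≥0} c_n ζ^{n+1}/(n+1)! with c_n = Σ_{p+q=n} a_p b_q has radius of convergence ≥ R, and its sum equals Φ*Ψ on D(0,R). -/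
open MeasureTheory

lemma beta_nat (p q : ℕ) :
    ∫ s in (0:ℝ)..1, (s:ℂ)^p * ((1:ℂ)-s)^q
      = (Nat.factorial p : ℂ) * (Nat.factorial q) / (Nat.factorial (p+q+1)) := by
  have h1 : Complex.betaIntegral (p+1) (q+1) = ∫ s in (0:ℝ)..1, (s:ℂ)^p * ((1:ℂ)-s)^q := by
    rw [Complex.betaIntegral]
    apply intervalIntegral.integral_congr
    intro s _
    push_cast
    rw [add_sub_cancel_right, add_sub_cancel_right, Complex.cpow_natCast, Complex.cpow_natCast]
  have h2 := Complex.Gamma_mul_Gamma_eq_betaIntegral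
    (s := (p:ℂ)+1) (t := (q:ℂ)+1) (by simp; positivity) (by simp; positivity)
  have h3 : ((p:ℂ)+1+((q:ℂ)+1)) = ((p+q+1 : ℕ) : ℂ) + 1 := by push_cast; ring
  rw [Complex.Gamma_nat_eq_factorial, Complex.Gamma_nat_eq_factorial, h3,
    Complex.Gamma_nat_eq_factorial] at h2
  rw [← h1, eq_div_iff (by exact_mod_cast Nat.factorial_ne_zero _), mul_comm]
  rw [← h2]

lemma key (a b : ℕ → ℂ) (ζ : ℂ)
    (hA : Summable (fun n : ℕ => a n * ζ ^ n / (Nat.factorial n : ℂ)))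
    (hB : Summable (fun n : ℕ => b n * ζ ^ n / (Nat.factorial n : ℂ))) :
    HasSum (fun n : ℕ =>
        (∑ p ∈ Finset.range (n + 1), a p * b (n - p)) * ζ ^ (n + 1) /
          (Nat.factorial (n + 1) : ℂ))
      (∫ s in (0:ℝ)..1,
        ζ * (∑' n : ℕ, a n * ((s : ℂ) * ζ) ^ n / (Nat.factorial n : ℂ)) *
          (∑' n : ℕ, b n * ((1 - (s : ℂ)) * ζ) ^ n / (Nat.factorial n : ℂ))) := by
  classical
  have hA' : Summable (fun n : ℕ => ‖a n * ζ ^ n / (Nat.factorial n : ℂ)‖) :=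
    summable_norm_iff.mpr hA
  have hB' : Summable (fun n : ℕ => ‖b n * ζ ^ n / (Nat.factorial n : ℂ)‖) :=
    summable_norm_iff.mpr hB
  have hterm : ∀ (c : ℕ → ℂ) (n : ℕ) (w : ℂ), ‖w‖ ≤ 1 →
      ‖c n * (w * ζ) ^ n / (Nat.factorial n : ℂ)‖ ≤ ‖c n * ζ ^ n / (Nat.factorial n : ℂ)‖ := by
    intro c n w hw
    simp only [norm_div, norm_mul, norm_pow]
    gcongr
    calc ‖w‖ * ‖ζ‖ ≤ 1 * ‖ζ‖ := by gcongr
      _ = ‖ζ‖ := one_mul _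
  have hscale : ∀ (c : ℕ → ℂ), Summable (fun n : ℕ => ‖c n * ζ ^ n / (Nat.factorial n : ℂ)‖) →
      ∀ w : ℂ, ‖w‖ ≤ 1 → Summable (fun n : ℕ => ‖c n * (w * ζ) ^ n / (Nat.factorial n : ℂ)‖) := by
    intro c hc w hw
    exact hc.of_nonneg_of_le (fun n => norm_nonneg _) (fun n => hterm c n w hw)
  set F : ℕ × ℕ → ℝ → ℂ := fun pq s =>
    ζ * (a pq.1 * ((s:ℂ) * ζ) ^ pq.1 / (Nat.factorial pq.1 : ℂ)) *
      (b pq.2 * ((1 - (s:ℂ)) * ζ) ^ pq.2 / (Nat.factorial pq.2 : ℂ)) with hF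
  have hcont : ∀ pq, Continuous (F pq) := by
    intro pq
    rw [hF]
    fun_prop
  have hint : ∀ pq, Integrable (F pq) (volume.restrict (Set.Ioc (0:ℝ) 1)) := by
    intro pq
    exact (hcont pq).integrableOn_Ioc
  set C : ℕ × ℕ → ℝ := fun pq =>
    ‖ζ‖ * (‖a pq.1 * ζ ^ pq.1 / (Nat.factorial pq.1 : ℂ)‖ *
      ‖b pq.2 * ζ ^ pq.2 / (Nat.factorial pq.2 : ℂ)‖) with hC
  have hCsum : Summable C :=
    (hA'.mul_of_nonneg hB' (fun _ => norm_nonneg _) (fun _ => norm_nonneg _)).mul_left ‖ζ‖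
  have hpt : ∀ pq, ∀ s ∈ Set.Ioc (0:ℝ) 1, ‖F pq s‖ ≤ C pq := by
    intro pq s hs
    have hs1 : ‖(s:ℂ)‖ ≤ 1 := by
      rw [Complex.norm_real, Real.norm_eq_abs]
      rw [abs_of_nonneg hs.1.le]
      exact hs.2
    have hs2 : ‖1 - (s:ℂ)‖ ≤ 1 := by
      have : (1 : ℂ) - (s:ℂ) = ((1 - s : ℝ) : ℂ) := by push_cast; ring
      rw [this, Complex.norm_real, Real.norm_eq_abs, abs_of_nonneg (by linarith [hs.2])]
      linarith [hs.1]
    rw [hF, hC]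
    simp only [norm_mul]
    rw [mul_assoc]
    gcongr
    · exact hterm a pq.1 _ hs1
    · exact hterm b pq.2 _ hs2
  have hnormint : ∀ pq, (∫ s, ‖F pq s‖ ∂(volume.restrict (Set.Ioc (0:ℝ) 1))) ≤ C pq := by
    intro pq
    have h1 : (∫ s, ‖F pq s‖ ∂(volume.restrict (Set.Ioc (0:ℝ) 1)))
        ≤ ∫ _ in Set.Ioc (0:ℝ) 1, C pq := by
      apply setIntegral_mono_on ((hint pq).norm) _ measurableSet_Ioc (hpt pq)
      exact integrableOn_const (by simp)
    calc (∫ s, ‖F pq s‖ ∂(volume.restrict (Set.Ioc (0:ℝ) 1)))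
        ≤ ∫ _ in Set.Ioc (0:ℝ) 1, C pq := h1
      _ = C pq := by simp
  have hFsum : Summable (fun pq => ∫ s, ‖F pq s‖ ∂(volume.restrict (Set.Ioc (0:ℝ) 1))) :=
    hCsum.of_nonneg_of_le (fun pq => integral_nonneg (fun s => norm_nonneg _)) hnormint
  have hs0 := hasSum_integral_of_summable_integral_norm hint hFsum
  have hval : (∫ s, (∑' pq : ℕ × ℕ, F pq s) ∂(volume.restrict (Set.Ioc (0:ℝ) 1)))
      = ∫ s in (0:ℝ)..1,
        ζ * (∑' n : ℕ, a n * ((s : ℂ) * ζ) ^ n / (Nat.factorial n : ℂ)) *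
          (∑' n : ℕ, b n * ((1 - (s : ℂ)) * ζ) ^ n / (Nat.factorial n : ℂ)) := by
    rw [intervalIntegral.integral_of_le zero_le_one]
    apply setIntegral_congr_fun measurableSet_Ioc
    intro s hs
    have hs1 : ‖(s:ℂ)‖ ≤ 1 := by
      rw [Complex.norm_real, Real.norm_eq_abs, abs_of_nonneg hs.1.le]; exact hs.2
    have hs2 : ‖1 - (s:ℂ)‖ ≤ 1 := by
      have : (1 : ℂ) - (s:ℂ) = ((1 - s : ℝ) : ℂ) := by push_cast; ring
      rw [this, Complex.norm_real, Real.norm_eq_abs, abs_of_nonneg (by linarith [hs.2])]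
      linarith [hs.1]
    have hsa := hscale a hA' _ hs1
    have hsb := hscale b hB' _ hs2
    calc (∑' pq : ℕ × ℕ, F pq s)
        = ∑' pq : ℕ × ℕ, ζ * ((a pq.1 * ((s:ℂ) * ζ) ^ pq.1 / (Nat.factorial pq.1 : ℂ)) *
            (b pq.2 * ((1 - (s:ℂ)) * ζ) ^ pq.2 / (Nat.factorial pq.2 : ℂ))) :=
          tsum_congr (fun pq => by rw [hF]; ring)
      _ = ζ * ∑' pq : ℕ × ℕ, (a pq.1 * ((s:ℂ) * ζ) ^ pq.1 / (Nat.factorial pq.1 : ℂ)) *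
            (b pq.2 * ((1 - (s:ℂ)) * ζ) ^ pq.2 / (Nat.factorial pq.2 : ℂ)) := tsum_mul_left
      _ = ζ * ((∑' n : ℕ, a n * ((s : ℂ) * ζ) ^ n / (Nat.factorial n : ℂ)) *
            (∑' n : ℕ, b n * ((1 - (s : ℂ)) * ζ) ^ n / (Nat.factorial n : ℂ))) := by
          rw [tsum_mul_tsum_of_summable_norm hsa hsb]
      _ = _ := (mul_assoc _ _ _).symm
  have hterm2 : ∀ pq : ℕ × ℕ, (∫ s, F pq s ∂(volume.restrict (Set.Ioc (0:ℝ) 1)))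
      = a pq.1 * b pq.2 * ζ ^ (pq.1 + pq.2 + 1) / (Nat.factorial (pq.1 + pq.2 + 1) : ℂ) := by
    rintro ⟨p, q⟩
    rw [← intervalIntegral.integral_of_le zero_le_one]
    have heq : ∀ s : ℝ, F (p, q) s =
        (ζ * a p * b q * ζ ^ p * ζ ^ q / ((Nat.factorial p : ℂ) * (Nat.factorial q : ℂ))) *
          ((s:ℂ) ^ p * ((1:ℂ) - (s:ℂ)) ^ q) := by
      intro s
      rw [hF]
      simp only [mul_pow]
      ring
    rw [intervalIntegral.integral_congr (fun s _ => heq s), intervalIntegral.integral_const_mul,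
      beta_nat]
    have hp : (Nat.factorial p : ℂ) ≠ 0 := by exact_mod_cast Nat.factorial_ne_zero p
    have hq : (Nat.factorial q : ℂ) ≠ 0 := by exact_mod_cast Nat.factorial_ne_zero q
    have hpq : (Nat.factorial (p + q + 1) : ℂ) ≠ 0 := by exact_mod_cast Nat.factorial_ne_zero _
    rw [pow_add, pow_add, pow_one]
    field_simp
  rw [funext hterm2, hval] at hs0
  have hs2 := (Finset.HasAntidiagonal.sigmaAntidiagonalEquivProd.hasSum_iff).mpr hs0
  have hs3 := hs2.sigma (fun n => Finset.hasSum (Finset.HasAntidiagonal.antidiagonal n)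
    (fun pq => a pq.1 * b pq.2 * ζ ^ (pq.1 + pq.2 + 1) / (Nat.factorial (pq.1 + pq.2 + 1) : ℂ)))
  have hfe : ∀ n : ℕ, (∑ pq ∈ Finset.HasAntidiagonal.antidiagonal n,
        a pq.1 * b pq.2 * ζ ^ (pq.1 + pq.2 + 1) / (Nat.factorial (pq.1 + pq.2 + 1) : ℂ))
      = (∑ p ∈ Finset.range (n + 1), a p * b (n - p)) * ζ ^ (n + 1) /
          (Nat.factorial (n + 1) : ℂ) := by
    intro n
    have hc : ∀ k ∈ Finset.range (n+1),
        a k * b (n-k) * ζ ^ (k + (n-k) + 1) / (Nat.factorial (k + (n-k) + 1) : ℂ)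
          = a k * b (n-k) * (ζ ^ (n+1) / (Nat.factorial (n+1) : ℂ)) := by
      intro k hk
      rw [Nat.add_sub_cancel' (Nat.lt_succ_iff.mp (Finset.mem_range.mp hk)), mul_div_assoc]
    rw [Finset.Nat.sum_antidiagonal_eq_sum_range_succ_mk, Finset.sum_congr rfl hc,
      ← Finset.sum_mul, mul_div_assoc]
  exact (funext hfe) ▸ hs3
/-- Convolution of two convergent Borel transforms: if `Σ aₙ ζⁿ/n!` and `Σ bₙ ζⁿ/n!`
have radius of convergence at least `R`, with sums `Φ`, `Ψ`, then
`Φ*Ψ(ζ) = ∫₀¹ ζ Φ(sζ) Ψ((1-s)ζ) ds` is holomorphic on `D(0,R)`, and the power series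
`Σ cₙ ζ^{n+1}/(n+1)!` with `cₙ = Σ_{p+q=n} a_p b_q` has radius of convergence at least `R`
and sums to `Φ*Ψ` there. -/
theorem stmt_1 (R : ℝ) (hR : 0 < R) (a b : ℕ → ℂ)
    (ha : ∀ ζ ∈ Metric.ball (0 : ℂ) R,
      Summable (fun n : ℕ => a n * ζ ^ n / (Nat.factorial n : ℂ)))
    (hb : ∀ ζ ∈ Metric.ball (0 : ℂ) R,
      Summable (fun n : ℕ => b n * ζ ^ n / (Nat.factorial n : ℂ))) :
    DifferentiableOn ℂ
        (fun ζ : ℂ => ∫ s in (0:ℝ)..1,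
          ζ * (∑' n : ℕ, a n * ((s : ℂ) * ζ) ^ n / (Nat.factorial n : ℂ)) *
            (∑' n : ℕ, b n * ((1 - (s : ℂ)) * ζ) ^ n / (Nat.factorial n : ℂ)))
        (Metric.ball (0 : ℂ) R) ∧
      (∀ ζ ∈ Metric.ball (0 : ℂ) R,
        Summable (fun n : ℕ =>
          (∑ p ∈ Finset.range (n + 1), a p * b (n - p)) * ζ ^ (n + 1) /
            (Nat.factorial (n + 1) : ℂ))) ∧
      ∀ ζ ∈ Metric.ball (0 : ℂ) R,
        (∑' n : ℕ, (∑ p ∈ Finset.range (n + 1), a p * b (n - p)) * ζ ^ (n + 1) /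
            (Nat.factorial (n + 1) : ℂ)) =
          ∫ s in (0:ℝ)..1,
            ζ * (∑' n : ℕ, a n * ((s : ℂ) * ζ) ^ n / (Nat.factorial n : ℂ)) *
              (∑' n : ℕ, b n * ((1 - (s : ℂ)) * ζ) ^ n / (Nat.factorial n : ℂ)) := by
  have key' : ∀ ζ ∈ Metric.ball (0 : ℂ) R,
      HasSum (fun n : ℕ =>
          (∑ p ∈ Finset.range (n + 1), a p * b (n - p)) * ζ ^ (n + 1) /
            (Nat.factorial (n + 1) : ℂ))
        (∫ s in (0:ℝ)..1,
          ζ * (∑' n : ℕ, a n * ((s : ℂ) * ζ) ^ n / (Nat.factorial n : ℂ)) *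
            (∑' n : ℕ, b n * ((1 - (s : ℂ)) * ζ) ^ n / (Nat.factorial n : ℂ))) :=
    fun ζ hζ => key a b ζ (ha ζ hζ) (hb ζ hζ)
  refine ⟨?_, fun ζ hζ => (key' ζ hζ).summable, fun ζ hζ => (key' ζ hζ).tsum_eq⟩
  set c : ℕ → ℂ := fun n => ∑ p ∈ Finset.range (n + 1), a p * b (n - p) with hc
  set d : ℕ → ℂ := fun n => Nat.rec 0 (fun m _ => c m / (Nat.factorial (m + 1) : ℂ)) n with hd
  have hdsucc : ∀ n, d (n + 1) = c n / (Nat.factorial (n + 1) : ℂ) := fun n => rfl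
  set p : FormalMultilinearSeries ℂ ℂ ℂ := FormalMultilinearSeries.ofScalars ℂ d with hp
  have hrad : ENNReal.ofReal R ≤ p.radius := by
    refine ENNReal.le_of_forall_nnreal_lt (fun r hr => ?_)
    have hrR : (r : ℝ) < R := by
      rwa [← ENNReal.ofReal_coe_nnreal, ENNReal.ofReal_lt_ofReal_iff hR] at hr
    have hmem : (((r : ℝ)) : ℂ) ∈ Metric.ball (0 : ℂ) R := by
      simp only [Metric.mem_ball, dist_zero_right, Complex.norm_real, Real.norm_eq_abs]
      rw [abs_of_nonneg r.coe_nonneg]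
      exact hrR
    have hsum := summable_norm_iff.mpr (key' _ hmem).summable
    have hn : Summable (fun n => ‖d n‖ * (r : ℝ) ^ n) := by
      rw [← summable_nat_add_iff 1]
      refine hsum.congr (fun n => ?_)
      rw [hdsucc n, norm_div, norm_mul, norm_div, norm_pow, Complex.norm_real,
        Real.norm_eq_abs, abs_of_nonneg r.coe_nonneg]
      ring
    apply p.le_radius_of_summable
    refine hn.congr (fun n => ?_)
    rw [hp, FormalMultilinearSeries.ofScalars_norm]
  have hradpos : 0 < p.radius :=
    lt_of_lt_of_le (ENNReal.ofReal_pos.mpr hR) hrad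
  have hdiff := (p.hasFPowerSeriesOnBall hradpos).differentiableOn
  have hsub : Metric.ball (0 : ℂ) R ⊆ Metric.eball (0 : ℂ) p.radius := by
    intro x hx
    rw [Metric.mem_eball, edist_dist]
    calc ENNReal.ofReal (dist x 0) < ENNReal.ofReal R :=
          ENNReal.ofReal_lt_ofReal_iff hR |>.mpr (Metric.mem_ball.mp hx)
      _ ≤ p.radius := hrad
  refine (hdiff.mono hsub).congr ?_
  intro ζ hζ
  have hk := key' ζ hζ
  set T := ∫ s in (0:ℝ)..1,
      ζ * (∑' n : ℕ, a n * ((s : ℂ) * ζ) ^ n / (Nat.factorial n : ℂ)) *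
        (∑' n : ℕ, b n * ((1 - (s : ℂ)) * ζ) ^ n / (Nat.factorial n : ℂ)) with hT
  have hf1 : HasSum (fun n => d (n + 1) • ζ ^ (n + 1)) T := by
    have heq : (fun n => d (n + 1) • ζ ^ (n + 1))
        = (fun n : ℕ => c n * ζ ^ (n + 1) / (Nat.factorial (n + 1) : ℂ)) :=
      funext fun n => by rw [hdsucc, smul_eq_mul, div_mul_eq_mul_div]
    rw [heq]
    exact hk
  have hd0 : d 0 = 0 := rfl
  have hf2 : HasSum (fun n => d n • ζ ^ n) T := by
    refine (hasSum_nat_add_iff' 1).mp ?_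
    have h0 : (∑ i ∈ Finset.range 1, d i • ζ ^ i) = 0 := by simp [hd0]
    rw [h0, sub_zero]
    exact hf1
  have : p.sum ζ = T := by
    rw [FormalMultilinearSeries.sum]
    rw [tsum_congr (FormalMultilinearSeries.ofScalars_apply_eq d ζ)]
    exact hf2.tsum_eq
  rw [hT] at this
  exact this.symm
end

section
/- Let c₀ ≥ 0, δ > 0, A > 0 and let φ̂ be holomorphic on the half-strip S_δ = {ζ ∈ ℂ : dist(ζ, ℝ≥0) < δ} with |φ̂(ζ)| ≤ A·e^{c₀|ζ|} for all ζ ∈ S_δ. Set a_n := φ̂^{(n)}(0) (the n-th complex derivative of φ̂ at 0) and φ(z) := ∫₀^{+∞} e^{−zζ} φ̂(ζ) dζ for Re z > c₀. Then for every c₁ > c₀ there exist L, M > 0 such that |φ(z) − a₀z^{−1} − a₁z^{−2} − ⋯ − a_{N−1}z^{−N}| ≤ L·M^N·N!·|z|^{−N−1} for every z ∈ ℂ with Re z > c₁ and every N ∈ ℕ. -/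
open MeasureTheory

/-- The half-strip `S_δ = {ζ ∈ ℂ : dist(ζ, ℝ≥0) < δ}`. -/
def halfStrip (δ : ℝ) : Set ℂ :=
  {ζ : ℂ | Metric.infDist ζ (Complex.ofReal '' Set.Ici (0 : ℝ)) < δ}

section StmtTwoAux

open Set Metric Filter

lemma mem_halfStrip' {δ : ℝ} {t : ℝ} (ht : 0 ≤ t) {w : ℂ} (hw : dist w (t : ℂ) < δ) :
    w ∈ halfStrip δ :=
  lt_of_le_of_lt (Metric.infDist_le_dist_of_mem (Set.mem_image_of_mem _ ht)) hw

lemma isOpen_halfStrip' (δ : ℝ) : IsOpen (halfStrip δ) :=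
  isOpen_lt (Metric.continuous_infDist_pt _) continuous_const

lemma integral_exp_neg_mul_Ioi'' {b : ℝ} (hb : 0 < b) :
    ∫ t in Set.Ioi (0:ℝ), Real.exp (-b * t) = 1 / b := by
  have hderiv : ∀ x ∈ Set.Ici (0:ℝ), HasDerivAt (fun t : ℝ => -Real.exp (-b * t) / b)
      (Real.exp (-b * x)) x := by
    intro x _
    have h1 : HasDerivAt (fun t : ℝ => -b * t) (-b) x := by
      simpa using (hasDerivAt_id x).const_mul (-b)
    have h2 := (h1.exp).neg.div_const b
    refine h2.congr_deriv ?_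
    rw [mul_neg, neg_neg, mul_div_cancel_right₀ _ hb.ne']
  have htop : Tendsto (fun t : ℝ => -Real.exp (-b * t) / b) atTop (nhds 0) := by
    have h1 : Tendsto (fun t : ℝ => b * t) atTop atTop :=
      Tendsto.const_mul_atTop hb tendsto_id
    have h2 : Tendsto (fun t : ℝ => -b * t) atTop atBot :=
      (tendsto_neg_atTop_atBot.comp h1).congr (fun x => (neg_mul b x).symm)
    have h3 := (Real.tendsto_exp_atBot.comp h2).neg.div_const b
    simpa [Function.comp] using h3
  have := integral_Ioi_of_hasDerivAt_of_tendsto' hderiv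
    ((exp_neg_integrableOn_Ioi 0 hb)) htop
  rw [this]
  simp [neg_div]

lemma deriv_bound' (c₀ δ A : ℝ) (hc₀ : 0 ≤ c₀) (hδ : 0 < δ) (hA : 0 < A) (φhat : ℂ → ℂ)
    (hol : DifferentiableOn ℂ φhat (halfStrip δ))
    (hbd : ∀ ζ ∈ halfStrip δ, ‖φhat ζ‖ ≤ A * Real.exp (c₀ * ‖ζ‖)) (n : ℕ) {t : ℝ}
    (ht : 0 ≤ t) :
    ‖iteratedDeriv n φhat (t : ℂ)‖ ≤
      A * Real.exp (c₀ * (t + δ / 2)) * n.factorial * (2 / δ) ^ n := by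
  set C : ℝ := A * Real.exp (c₀ * (t + δ / 2)) with hC
  have hCpos : 0 < C := by positivity
  set r : NNReal := ⟨δ / 2, by positivity⟩ with hr
  have hrpos : (0 : NNReal) < r := by
    rw [← NNReal.coe_lt_coe]; show (0:ℝ) < δ/2; positivity
  have hrr : (r : ℝ) = δ / 2 := rfl
  have hsub : Metric.closedBall (t : ℂ) (r : ℝ) ⊆ halfStrip δ := by
    intro w hw
    exact mem_halfStrip' ht (lt_of_le_of_lt (Metric.mem_closedBall.mp hw) (by rw [hrr]; linarith))
  have hd : DifferentiableOn ℂ φhat (Metric.closedBall (t : ℂ) r) := hol.mono hsub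
  have H := hd.hasFPowerSeriesOnBall hrpos
  have h1 : (n.factorial : ℕ) • (cauchyPowerSeries φhat t r n fun _ => (1 : ℂ)) =
      iteratedDeriv n φhat (t : ℂ) := by
    rw [iteratedDeriv_eq_iteratedFDeriv]
    exact H.factorial_smul 1 n
  have hcirc : ∀ θ : ℝ, ‖φhat (circleMap (t : ℂ) r θ)‖ ≤ C := by
    intro θ
    have hmem : circleMap (t : ℂ) r θ ∈ halfStrip δ := by
      apply mem_halfStrip' ht
      have : dist (circleMap (t : ℂ) r θ) (t : ℂ) = |(r : ℝ)| := by
        rw [Complex.dist_eq, circleMap_sub_center, norm_circleMap_zero]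
      rw [this, hrr, abs_of_pos (by positivity)]; linarith
    refine le_trans (hbd _ hmem) ?_
    rw [hC]
    have hn : ‖circleMap (t : ℂ) r θ‖ ≤ t + δ / 2 := by
      have he : circleMap (t : ℂ) r θ = (circleMap (t : ℂ) r θ - (t : ℂ)) + (t : ℂ) := by ring
      calc ‖circleMap (t : ℂ) r θ‖
          ≤ ‖circleMap (t : ℂ) r θ - (t : ℂ)‖ + ‖(t : ℂ)‖ := by
            nth_rewrite 1 [he]; exact norm_add_le _ _
        _ = |(r : ℝ)| + |t| := by
            rw [circleMap_sub_center,
              norm_circleMap_zero, Complex.norm_real, Real.norm_eq_abs]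
        _ ≤ t + δ / 2 := by
            rw [hrr, abs_of_nonneg ht, abs_of_pos (by positivity : (0:ℝ) < δ/2)]; linarith
    gcongr
  have h2 : ‖cauchyPowerSeries φhat t r n‖ ≤ C * (2 / δ) ^ n := by
    refine le_trans (norm_cauchyPowerSeries_le φhat t r n) ?_
    have hii : (∫ θ : ℝ in (0)..2 * Real.pi, ‖φhat (circleMap (t : ℂ) r θ)‖) ≤
        (2 * Real.pi) * C := by
      have := intervalIntegral.integral_mono_on (a := 0) (b := 2 * Real.pi) (μ := volume)
        (f := fun θ => ‖φhat (circleMap (t : ℂ) r θ)‖) (g := fun _ => C)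
        Real.two_pi_pos.le ?_ (intervalIntegrable_const) (fun θ _ => hcirc θ)
      · rw [intervalIntegral.integral_const, smul_eq_mul, sub_zero] at this
        linarith
      · apply Continuous.intervalIntegrable
        apply Continuous.norm
        exact (hol.continuousOn.mono (by intro x hx; exact hx)).comp_continuous
          (continuous_circleMap _ _) (fun θ => by
            apply mem_halfStrip' ht
            have : dist (circleMap (t : ℂ) r θ) (t : ℂ) = |(r : ℝ)| := by
              rw [Complex.dist_eq, circleMap_sub_center, norm_circleMap_zero]
            rw [this, hrr, abs_of_pos (by positivity)]; linarith)
    have habs : |(r : ℝ)|⁻¹ = 2 / δ := by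
      rw [hrr, abs_of_pos (by positivity : (0:ℝ) < δ/2), inv_div]
    rw [habs]
    refine mul_le_mul_of_nonneg_right ?_ (by positivity)
    have h2pi : (0:ℝ) < 2 * Real.pi := Real.two_pi_pos
    calc (2 * Real.pi)⁻¹ * ∫ θ : ℝ in (0)..2 * Real.pi, ‖φhat (circleMap (t : ℂ) r θ)‖
        ≤ (2 * Real.pi)⁻¹ * ((2 * Real.pi) * C) := by gcongr
      _ = C := by field_simp
  have h3 : ‖iteratedDeriv n φhat (t : ℂ)‖ ≤ (n.factorial : ℝ) * (C * (2 / δ) ^ n) := by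
    rw [← h1, ← Nat.cast_smul_eq_nsmul ℂ, norm_smul]
    simp only [Complex.norm_natCast]
    gcongr
    refine le_trans ?_ h2
    have := (cauchyPowerSeries φhat t r n).le_opNorm (fun _ => (1 : ℂ))
    simpa using this
  calc ‖iteratedDeriv n φhat (t : ℂ)‖ ≤ (n.factorial : ℝ) * (C * (2 / δ) ^ n) := h3
    _ = C * n.factorial * (2 / δ) ^ n := by ring

end StmtTwoAux

open Set Metric Filter in
/-- The Laplace transform along `ℝ⁺` of a function holomorphic with at most exponential
growth on a half-strip around `ℝ≥0` admits the associated formal series as uniform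
1-Gevrey asymptotic expansion on every half-plane `{Re z > c₁}` with `c₁ > c₀`. -/
theorem stmt_2 (c₀ δ A : ℝ) (hc₀ : 0 ≤ c₀) (hδ : 0 < δ) (hA : 0 < A) (φhat : ℂ → ℂ)
    (hol : DifferentiableOn ℂ φhat (halfStrip δ))
    (hbd : ∀ ζ ∈ halfStrip δ, ‖φhat ζ‖ ≤ A * Real.exp (c₀ * ‖ζ‖)) :
    ∀ c₁ : ℝ, c₀ < c₁ → ∃ L M : ℝ, 0 < L ∧ 0 < M ∧
      ∀ z : ℂ, c₁ < z.re → ∀ N : ℕ,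
        ‖(∫ t in Set.Ioi (0:ℝ), Complex.exp (-z * (t : ℂ)) * φhat (t : ℂ)) -
            (∑ n ∈ Finset.range N, iteratedDeriv n φhat 0 / z ^ (n + 1))‖ ≤
          L * M ^ N * (Nat.factorial N : ℝ) * ‖z‖⁻¹ ^ (N + 1) := by
  intro c₁ hc₁
  have hU : IsOpen (halfStrip δ) := isOpen_halfStrip' δ
  have hmemt : ∀ t : ℝ, 0 ≤ t → (t : ℂ) ∈ halfStrip δ := fun t ht =>
    mem_halfStrip' ht (by simpa using hδ)
  have hAnal : ∀ n, AnalyticOnNhd ℂ (iteratedDeriv n φhat) (halfStrip δ) := by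
    intro n
    induction n with
    | zero => simpa [iteratedDeriv_zero] using hol.analyticOnNhd hU
    | succ n ih => rw [iteratedDeriv_succ]; exact ih.deriv
  set B0 : ℝ := A * Real.exp (c₀ * (δ / 2)) with hB0def
  have hB0 : 0 < B0 := by positivity
  have hDB : ∀ n, ∀ t : ℝ, 0 ≤ t →
      ‖iteratedDeriv n φhat (t : ℂ)‖ ≤ B0 * Real.exp (c₀ * t) * n.factorial * (2/δ) ^ n := by
    intro n t ht
    have h := deriv_bound' c₀ δ A hc₀ hδ hA φhat hol hbd n ht
    have he : A * Real.exp (c₀ * (t + δ/2)) = B0 * Real.exp (c₀ * t) := by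
      rw [hB0def, mul_add, Real.exp_add]; ring
    rwa [he] at h
  set ε₀ : ℝ := c₁ - c₀ with hε₀def
  have hε₀ : 0 < ε₀ := sub_pos.mpr hc₁
  refine ⟨2 * B0 * (1 + 2 / (δ * ε₀)), 4 / δ, by positivity, by positivity, ?_⟩
  intro z hz N
  have hzre : 0 < z.re := lt_of_le_of_lt hc₀ (hc₁.trans hz)
  have hz0 : z ≠ 0 := by intro h; rw [h] at hzre; simp at hzre
  set b : ℝ := z.re - c₀ with hbdef
  have hb : 0 < b := by rw [hbdef]; linarith [hc₁.trans hz]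
  have hbε : ε₀ ≤ b := by rw [hbdef, hε₀def]; linarith
  set F : ℕ → ℝ → ℂ := fun n t => Complex.exp (-z * t) * iteratedDeriv n φhat t with hF
  set Iv : ℕ → ℂ := fun n => ∫ t in Set.Ioi (0:ℝ), F n t with hI
  set Cn : ℕ → ℝ := fun n => B0 * n.factorial * (2/δ) ^ n with hCn
  have hCnpos : ∀ n, 0 < Cn n := by intro n; rw [hCn]; positivity
  have hnorm : ∀ n, ∀ t : ℝ, 0 ≤ t → ‖F n t‖ ≤ Cn n * Real.exp (-b * t) := by
    intro n t ht
    rw [hF, norm_mul]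
    have h1 : ‖Complex.exp (-z * (t:ℂ))‖ = Real.exp (-z.re * t) := by
      rw [Complex.norm_exp]
      congr 1
      simp [neg_mul]
    rw [h1]
    have hee : Real.exp (-z.re * t) * Real.exp (c₀ * t) = Real.exp (-b * t) := by
      rw [← Real.exp_add]; congr 1; rw [hbdef]; ring
    calc Real.exp (-z.re * t) * ‖iteratedDeriv n φhat (t:ℂ)‖
        ≤ Real.exp (-z.re * t) * (B0 * Real.exp (c₀ * t) * n.factorial * (2/δ) ^ n) :=
          mul_le_mul_of_nonneg_left (hDB n t ht) (Real.exp_pos _).le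
      _ = (B0 * n.factorial * (2/δ) ^ n) * (Real.exp (-z.re * t) * Real.exp (c₀ * t)) := by ring
      _ = Cn n * Real.exp (-b * t) := by rw [hee, hCn]
  have hcont : ∀ n, ContinuousOn (F n) (Set.Ici (0:ℝ)) := by
    intro n
    apply ContinuousOn.mul
    · exact (Complex.continuous_exp.comp (continuous_const.mul Complex.continuous_ofReal)).continuousOn
    · exact (hAnal n).continuousOn.comp Complex.continuous_ofReal.continuousOn
        (fun t ht => hmemt t ht)
  have hExpInt : IntegrableOn (fun t => Real.exp (-b * t)) (Set.Ioi (0:ℝ)) volume :=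
    exp_neg_integrableOn_Ioi 0 hb
  have hint : ∀ n, IntegrableOn (F n) (Set.Ioi (0:ℝ)) volume := by
    intro n
    apply Integrable.mono' (hExpInt.const_mul (Cn n))
    · exact ((hcont n).mono Set.Ioi_subset_Ici_self).aestronglyMeasurable measurableSet_Ioi
    · filter_upwards [ae_restrict_mem measurableSet_Ioi] with t ht
      exact hnorm n t (le_of_lt ht)
  have htend : ∀ n, Tendsto (F n) atTop (nhds 0) := by
    intro n
    apply squeeze_zero_norm'
    · filter_upwards [eventually_ge_atTop (0:ℝ)] with t ht using hnorm n t ht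
    · have h1 : Tendsto (fun t:ℝ => b * t) atTop atTop := Tendsto.const_mul_atTop hb tendsto_id
      have h2 : Tendsto (fun t:ℝ => -b * t) atTop atBot :=
        (tendsto_neg_atTop_atBot.comp h1).congr (fun x => (neg_mul b x).symm)
      have h3 := (Real.tendsto_exp_atBot.comp h2).const_mul (Cn n)
      simpa using h3
  have hIBP : ∀ n, Iv n = (iteratedDeriv n φhat 0 + Iv (n + 1)) / z := by
    intro n
    have hder : ∀ t : ℝ, t ∈ Set.Ioi (0:ℝ) → HasDerivAt (F n)
        (-z * F n t + F (n+1) t) t := by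
      intro t ht
      have he : HasDerivAt (fun w : ℂ => Complex.exp (-z * w))
          (Complex.exp (-z * (t:ℂ)) * (-z)) (t:ℂ) := by
        have := ((hasDerivAt_id ((t:ℝ):ℂ)).const_mul (-z)).cexp
        simpa using this
      have hg : HasDerivAt (iteratedDeriv n φhat) (iteratedDeriv (n+1) φhat (t:ℂ)) (t:ℂ) := by
        have hd := ((hAnal n) _ (hmemt t (le_of_lt (Set.mem_Ioi.mp ht)))).differentiableAt
        rw [iteratedDeriv_succ]
        exact hd.hasDerivAt
      have h := (he.comp_ofReal).mul (hg.comp_ofReal)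
      have heq : Complex.exp (-z * (t:ℂ)) * (-z) * iteratedDeriv n φhat (t:ℂ) +
          Complex.exp (-z * (t:ℂ)) * iteratedDeriv (n+1) φhat (t:ℂ)
          = -z * F n t + F (n+1) t := by
        rw [hF]; ring
      rw [heq] at h
      exact h
    have hintd : IntegrableOn (fun t : ℝ => -z * F n t + F (n+1) t) (Set.Ioi (0:ℝ)) volume :=
      ((hint n).const_mul (-z)).add (hint (n+1))
    have key := integral_Ioi_of_hasDerivAt_of_tendsto (a := 0) (m := 0)
      ((hcont n) 0 Set.self_mem_Ici) hder hintd (htend n)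
    rw [integral_add ((hint n).const_mul (-z)) (hint (n+1)), integral_const_mul] at key
    have hF0 : F n 0 = iteratedDeriv n φhat 0 := by
      rw [hF]; simp
    rw [hF0] at key
    have : -z * Iv n + Iv (n+1) = 0 - iteratedDeriv n φhat 0 := by
      rw [hI]; exact key
    rw [eq_div_iff hz0]
    linear_combination -this
  have hExpand : ∀ N : ℕ, Iv 0 = (∑ n ∈ Finset.range N, iteratedDeriv n φhat 0 / z ^ (n+1))
      + Iv N / z ^ N := by
    intro N
    induction N with
    | zero => simp
    | succ N ih =>
      rw [ih, Finset.sum_range_succ, hIBP N]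
      have hzN : z ^ N ≠ 0 := pow_ne_zero _ hz0
      field_simp
      ring
  have hLHS : (∫ t in Set.Ioi (0:ℝ), Complex.exp (-z * (t : ℂ)) * φhat (t : ℂ)) = Iv 0 := by
    rw [hI]; simp [hF, iteratedDeriv_zero]
  rw [hLHS, hExpand N, add_sub_cancel_left, hIBP N]
  have hnorm_eq : ‖((iteratedDeriv N φhat 0 + Iv (N+1)) / z) / z ^ N‖
      = ‖iteratedDeriv N φhat 0 + Iv (N+1)‖ * ‖z‖⁻¹ ^ (N+1) := by
    rw [div_div, ← pow_succ' z N, norm_div, norm_pow, inv_pow, div_eq_mul_inv]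
  rw [hnorm_eq]
  have haN : ‖iteratedDeriv N φhat 0‖ ≤ B0 * N.factorial * (2/δ) ^ N := by
    have h := hDB N 0 le_rfl
    simpa using h
  have hIN : ‖Iv (N+1)‖ ≤ Cn (N+1) * (1 / b) := by
    rw [hI]
    refine le_trans (norm_integral_le_of_norm_le (hExpInt.const_mul (Cn (N+1))) ?_) ?_
    · filter_upwards [ae_restrict_mem measurableSet_Ioi] with t ht
      exact hnorm (N+1) t ht.le
    · rw [integral_const_mul, integral_exp_neg_mul_Ioi'' hb]
  have hIN' : ‖Iv (N+1)‖ ≤ Cn (N+1) * (1 / ε₀) := by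
    refine le_trans hIN ?_
    have : 1 / b ≤ 1 / ε₀ := one_div_le_one_div_of_le hε₀ hbε
    exact mul_le_mul_of_nonneg_left this (hCnpos (N+1)).le
  have hN2 : ((N:ℝ) + 1) ≤ 2 * 2 ^ N := by
    have h := (Nat.lt_two_pow_self (n := N+1)).le
    have h' : ((N+1 : ℕ) : ℝ) ≤ ((2 ^ (N+1) : ℕ) : ℝ) := by exact_mod_cast h
    push_cast at h'
    calc ((N:ℝ) + 1) ≤ 2 ^ (N+1) := h'
      _ = 2 * 2 ^ N := by rw [pow_succ]; ring
  have hkey : ‖iteratedDeriv N φhat 0 + Iv (N+1)‖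
      ≤ 2 * B0 * (1 + 2 / (δ * ε₀)) * (4/δ) ^ N * N.factorial := by
    refine le_trans (norm_add_le _ _) (le_trans (add_le_add haN hIN') ?_)
    set q : ℝ := 2 / (δ * ε₀) with hq
    have hqpos : 0 ≤ q := by positivity
    have hCn1 : Cn (N+1) * (1 / ε₀) = B0 * N.factorial * (2/δ) ^ N * (((N:ℝ)+1) * q) := by
      rw [hCn, hq]
      have : (Nat.factorial (N+1) : ℝ) = ((N:ℝ)+1) * N.factorial := by
        rw [Nat.factorial_succ]; push_cast; ring
      simp only [this, pow_succ]
      field_simp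
    rw [hCn1]
    have hprod : ((N:ℝ)+1) * q ≤ (2 * 2 ^ N) * q := mul_le_mul_of_nonneg_right hN2 hqpos
    have hfac : (0:ℝ) ≤ B0 * N.factorial * (2/δ) ^ N := by positivity
    calc B0 * N.factorial * (2/δ) ^ N + B0 * N.factorial * (2/δ) ^ N * (((N:ℝ)+1) * q)
        = B0 * N.factorial * (2/δ) ^ N * (1 + ((N:ℝ)+1) * q) := by ring
      _ ≤ B0 * N.factorial * (2/δ) ^ N * (2 * 2 ^ N * (1 + q)) := by
          refine mul_le_mul_of_nonneg_left ?_ hfac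
          have h1 : (1:ℝ) ≤ 2 * 2 ^ N := by
            have h2 : (1:ℝ) ≤ 2 ^ N := one_le_pow₀ (by norm_num)
            linarith
          linarith [hprod]
      _ = 2 * B0 * (1 + q) * (4/δ) ^ N * N.factorial := by
          rw [show (4/δ : ℝ) = 2 * (2/δ) by ring, mul_pow]
          ring
  calc ‖iteratedDeriv N φhat 0 + Iv (N+1)‖ * ‖z‖⁻¹ ^ (N+1)
      ≤ (2 * B0 * (1 + 2 / (δ * ε₀)) * (4/δ) ^ N * N.factorial) * ‖z‖⁻¹ ^ (N+1) :=
        mul_le_mul_of_nonneg_right hkey (by positivity)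
    _ = 2 * B0 * (1 + 2 / (δ * ε₀)) * (4/δ) ^ N * N.factorial * ‖z‖⁻¹ ^ (N+1) := by ring
end

section
/- Let θ₁, θ₂ ∈ ℝ with 0 < θ₂ − θ₁ < π, let c ∈ ℝ, A > 0, and let φ̂ be holomorphic on an open subset of ℂ containing the closed sector Σ = {ξ·e^{iθ} : ξ ≥ 0, θ ∈ [θ₁, θ₂]}, with |φ̂(ζ)| ≤ A·e^{c|ζ|} for all ζ ∈ Σ. Then the set {z ∈ ℂ : Re(z·e^{iθ₁}) > c and Re(z·e^{iθ₂}) > c} is nonempty, and for every z in this set one has ∫₀^{+∞} e^{−z·ξe^{iθ₁}} φ̂(ξe^{iθ₁}) e^{iθ₁} dξ = ∫₀^{+∞} e^{−z·ξe^{iθ₂}} φ̂(ξe^{iθ₂}) e^{iθ₂} dξ. -/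
open MeasureTheory

/-- The closed sector `{ξ·e^{iθ} : ξ ≥ 0, θ ∈ [θ₁, θ₂]}`. -/
def closedSector (θ₁ θ₂ : ℝ) : Set ℂ :=
  {ζ : ℂ | ∃ ξ θ : ℝ, 0 ≤ ξ ∧ θ₁ ≤ θ ∧ θ ≤ θ₂ ∧
    ζ = (ξ : ℂ) * Complex.exp ((θ : ℂ) * Complex.I)}

section st4aux
open Set Complex Filter
noncomputable def st4E (θ : ℝ) : ℂ := Complex.exp ((θ : ℂ) * Complex.I)

lemma st4E_norm (θ : ℝ) : ‖st4E θ‖ = 1 := by simp [st4E, Complex.norm_exp]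

lemma st4_cone {θ₁ θ₂ θ : ℝ} (h1 : θ₁ ≤ θ) (h2 : θ ≤ θ₂) (hθ : 0 < θ₂ - θ₁)
    (hπ : θ₂ - θ₁ < Real.pi) :
    ∃ l₁ l₂ : ℝ, 0 ≤ l₁ ∧ 0 ≤ l₂ ∧ 1 ≤ l₁ + l₂ ∧
      st4E θ = (l₁ : ℂ) * st4E θ₁ + (l₂ : ℂ) * st4E θ₂ := by
  have hs : 0 < Real.sin (θ₂ - θ₁) := Real.sin_pos_of_pos_of_lt_pi hθ hπ
  have hs2 : 0 ≤ Real.sin (θ₂ - θ) :=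
    Real.sin_nonneg_of_nonneg_of_le_pi (by linarith) (by linarith)
  have hs1 : 0 ≤ Real.sin (θ - θ₁) :=
    Real.sin_nonneg_of_nonneg_of_le_pi (by linarith) (by linarith)
  have key : (Real.sin (θ₂ - θ₁) : ℂ) * st4E θ
      = (Real.sin (θ₂ - θ) : ℂ) * st4E θ₁ + (Real.sin (θ - θ₁) : ℂ) * st4E θ₂ := by
    apply Complex.ext <;>
      · simp only [st4E, Complex.add_re, Complex.add_im, Complex.re_ofReal_mul,
          Complex.im_ofReal_mul, Complex.exp_ofReal_mul_I_re, Complex.exp_ofReal_mul_I_im]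
        rw [Real.sin_sub, Real.sin_sub, Real.sin_sub]
        ring
  have hnorm : Real.sin (θ₂ - θ₁) ≤ Real.sin (θ₂ - θ) + Real.sin (θ - θ₁) := by
    have h0 : ‖(Real.sin (θ₂ - θ₁) : ℂ) * st4E θ‖ = Real.sin (θ₂ - θ₁) := by
      rw [norm_mul, st4E_norm, mul_one, Complex.norm_real, Real.norm_of_nonneg hs.le]
    have hA : ‖(Real.sin (θ₂ - θ) : ℂ) * st4E θ₁‖ = Real.sin (θ₂ - θ) := by
      rw [norm_mul, st4E_norm, mul_one, Complex.norm_real, Real.norm_of_nonneg hs2]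
    have hB : ‖(Real.sin (θ - θ₁) : ℂ) * st4E θ₂‖ = Real.sin (θ - θ₁) := by
      rw [norm_mul, st4E_norm, mul_one, Complex.norm_real, Real.norm_of_nonneg hs1]
    calc Real.sin (θ₂ - θ₁) = ‖(Real.sin (θ₂ - θ₁) : ℂ) * st4E θ‖ := h0.symm
      _ = ‖(Real.sin (θ₂ - θ) : ℂ) * st4E θ₁ + (Real.sin (θ - θ₁) : ℂ) * st4E θ₂‖ := by rw [key]
      _ ≤ _ := norm_add_le _ _
      _ = Real.sin (θ₂ - θ) + Real.sin (θ - θ₁) := by rw [hA, hB]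
  refine ⟨Real.sin (θ₂ - θ) / Real.sin (θ₂ - θ₁), Real.sin (θ - θ₁) / Real.sin (θ₂ - θ₁),
    div_nonneg hs2 hs.le, div_nonneg hs1 hs.le, ?_, ?_⟩
  · rw [← add_div, le_div_iff₀ hs, one_mul]; exact hnorm
  · have hs' : (Real.sin (θ₂ - θ₁) : ℂ) ≠ 0 := by exact_mod_cast hs.ne'
    rw [Complex.ofReal_div, Complex.ofReal_div, div_mul_eq_mul_div, div_mul_eq_mul_div,
      ← add_div, eq_div_iff hs']
    linear_combination key

lemma st4_cone_re {θ₁ θ₂ θ : ℝ} (h1 : θ₁ ≤ θ) (h2 : θ ≤ θ₂) (hθ : 0 < θ₂ - θ₁)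
    (hπ : θ₂ - θ₁ < Real.pi) (z : ℂ) {m : ℝ} (hm : 0 ≤ m)
    (hb1 : m ≤ (z * st4E θ₁).re) (hb2 : m ≤ (z * st4E θ₂).re) : m ≤ (z * st4E θ).re := by
  obtain ⟨l₁, l₂, hl₁, hl₂, hsum, hE⟩ := st4_cone h1 h2 hθ hπ
  have e1 : z * ((l₁ : ℂ) * st4E θ₁) = (l₁ : ℂ) * (z * st4E θ₁) := by ring
  have e2 : z * ((l₂ : ℂ) * st4E θ₂) = (l₂ : ℂ) * (z * st4E θ₂) := by ring
  have : (z * st4E θ).re = l₁ * (z * st4E θ₁).re + l₂ * (z * st4E θ₂).re := by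
    rw [hE, mul_add, e1, e2, Complex.add_re, Complex.re_ofReal_mul, Complex.re_ofReal_mul]
  nlinarith [mul_le_mul_of_nonneg_left hb1 hl₁, mul_le_mul_of_nonneg_left hb2 hl₂]

lemma st4E_mem {θ₁ θ₂ : ℝ} {ξ θ : ℝ} (hξ : 0 ≤ ξ) (h1 : θ₁ ≤ θ) (h2 : θ ≤ θ₂) :
    (ξ : ℂ) * st4E θ ∈ closedSector θ₁ θ₂ := ⟨ξ, θ, hξ, h1, h2, rfl⟩

lemma st4_norm_mul (ξ θ : ℝ) (hξ : 0 ≤ ξ) : ‖(ξ : ℂ) * st4E θ‖ = ξ := by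
  rw [norm_mul, st4E_norm, mul_one, Complex.norm_real, Real.norm_of_nonneg hξ]

lemma st4_re_mul (z : ℂ) (ξ θ : ℝ) : (-z * ((ξ:ℂ) * st4E θ)).re = -(ξ * (z * st4E θ).re) := by
  have : -z * ((ξ:ℂ) * st4E θ) = (ξ:ℂ) * -(z * st4E θ) := by ring
  rw [this, Complex.re_ofReal_mul, Complex.neg_re]; ring

noncomputable def st4Lap (φhat : ℂ → ℂ) (θ : ℝ) (z : ℂ) : ℂ :=
  ∫ ξ in Set.Ioi (0:ℝ),
    Complex.exp (-z * ((ξ:ℂ) * st4E θ)) * φhat ((ξ:ℂ) * st4E θ) * st4E θ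

lemma st4_norm_integrand {θ₁ θ₂ c A : ℝ} {φhat : ℂ → ℂ}
    (hbd : ∀ ζ ∈ closedSector θ₁ θ₂, ‖φhat ζ‖ ≤ A * Real.exp (c * ‖ζ‖))
    {θ : ℝ} (h1 : θ₁ ≤ θ) (h2 : θ ≤ θ₂) (z : ℂ) {ξ : ℝ} (hξ : 0 ≤ ξ) :
    ‖Complex.exp (-z * ((ξ:ℂ) * st4E θ)) * φhat ((ξ:ℂ) * st4E θ) * st4E θ‖
      ≤ A * Real.exp ((c - (z * st4E θ).re) * ξ) := by
  rw [norm_mul, norm_mul, st4E_norm, mul_one, Complex.norm_exp, st4_re_mul]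
  have hb := hbd _ (st4E_mem hξ h1 h2)
  rw [st4_norm_mul _ _ hξ] at hb
  calc Real.exp (-(ξ * (z * st4E θ).re)) * ‖φhat ((ξ:ℂ) * st4E θ)‖
      ≤ Real.exp (-(ξ * (z * st4E θ).re)) * (A * Real.exp (c * ξ)) :=
        mul_le_mul_of_nonneg_left hb (Real.exp_pos _).le
    _ = A * (Real.exp (-(ξ * (z * st4E θ).re)) * Real.exp (c * ξ)) := by ring
    _ = A * Real.exp ((c - (z * st4E θ).re) * ξ) := by rw [← Real.exp_add]; congr 1; ring

lemma st4_cont {θ₁ θ₂ : ℝ} {φhat : ℂ → ℂ} {U : Set ℂ} (hSU : closedSector θ₁ θ₂ ⊆ U)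
    (hφ : DifferentiableOn ℂ φhat U) {θ : ℝ} (h1 : θ₁ ≤ θ) (h2 : θ ≤ θ₂) (z : ℂ) :
    ContinuousOn
      (fun ξ : ℝ => Complex.exp (-z * ((ξ:ℂ) * st4E θ)) * φhat ((ξ:ℂ) * st4E θ) * st4E θ)
      (Set.Ici 0) := by
  have hray : Continuous fun ξ : ℝ => (ξ:ℂ) * st4E θ :=
    Complex.continuous_ofReal.mul continuous_const
  have hmap : Set.MapsTo (fun ξ : ℝ => (ξ:ℂ) * st4E θ) (Set.Ici 0) U :=
    fun ξ hξ => hSU (st4E_mem hξ h1 h2)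
  have hc1 : ContinuousOn (fun ξ : ℝ => φhat ((ξ:ℂ) * st4E θ)) (Set.Ici 0) :=
    hφ.continuousOn.comp hray.continuousOn hmap
  exact (((Complex.continuous_exp.comp (continuous_const.mul hray)).continuousOn).mul hc1).mul
    continuousOn_const

lemma st4_integrable {θ₁ θ₂ c A : ℝ} {φhat : ℂ → ℂ} {U : Set ℂ}
    (hSU : closedSector θ₁ θ₂ ⊆ U) (hφ : DifferentiableOn ℂ φhat U)
    (hbd : ∀ ζ ∈ closedSector θ₁ θ₂, ‖φhat ζ‖ ≤ A * Real.exp (c * ‖ζ‖))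
    {θ : ℝ} (h1 : θ₁ ≤ θ) (h2 : θ ≤ θ₂) {z : ℂ} (hz : c < (z * st4E θ).re) :
    IntegrableOn
      (fun ξ : ℝ => Complex.exp (-z * ((ξ:ℂ) * st4E θ)) * φhat ((ξ:ℂ) * st4E θ) * st4E θ)
      (Set.Ioi 0) := by
  have hmeas := (((st4_cont hSU hφ h1 h2 z).mono Set.Ioi_subset_Ici_self)).aestronglyMeasurable (μ := volume)
    measurableSet_Ioi
  refine Integrable.mono'
    ((exp_neg_integrableOn_Ioi 0 (show (0:ℝ) < (z * st4E θ).re - c by linarith)).const_mul A)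
    hmeas ?_
  filter_upwards [ae_restrict_mem measurableSet_Ioi] with ξ hξ
  have h := st4_norm_integrand hbd h1 h2 z (le_of_lt hξ)
  have e : (c - (z * st4E θ).re) * ξ = -((z * st4E θ).re - c) * ξ := by ring
  rwa [e] at h

lemma st4_int_linexp {b : ℝ} (hb : 0 < b) :
    IntegrableOn (fun ξ : ℝ => ξ * Real.exp (-b * ξ)) (Set.Ioi 0) := by
  have hcont : Continuous fun ξ : ℝ => ξ * Real.exp (-b * ξ) :=
    continuous_id.mul ((continuous_const.mul continuous_id).rexp)
  refine Integrable.mono'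
    ((exp_neg_integrableOn_Ioi 0 (show (0:ℝ) < b/2 by linarith)).const_mul (2/b))
    hcont.aestronglyMeasurable.restrict ?_
  filter_upwards [ae_restrict_mem measurableSet_Ioi] with ξ hξ
  have hξ0 : (0:ℝ) < ξ := hξ
  have h1 : ξ ≤ (2/b) * Real.exp (b/2 * ξ) := by
    have h2 := Real.add_one_le_exp (b/2 * ξ)
    have h3 : b/2 * ξ ≤ Real.exp (b/2 * ξ) := by linarith
    calc ξ = (2/b) * (b/2 * ξ) := by field_simp
      _ ≤ (2/b) * Real.exp (b/2 * ξ) := by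
          exact mul_le_mul_of_nonneg_left h3 (by positivity)
  rw [Real.norm_of_nonneg (by positivity)]
  calc ξ * Real.exp (-b * ξ) ≤ ((2/b) * Real.exp (b/2 * ξ)) * Real.exp (-b * ξ) :=
        mul_le_mul_of_nonneg_right h1 (Real.exp_pos _).le
    _ = (2/b) * Real.exp (-(b/2) * ξ) := by
        rw [mul_assoc, ← Real.exp_add]; congr 2; ring

lemma st4_lap_diffAt {θ₁ θ₂ c A : ℝ} {φhat : ℂ → ℂ} {U : Set ℂ}
    (hSU : closedSector θ₁ θ₂ ⊆ U) (hφ : DifferentiableOn ℂ φhat U)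
    (hbd : ∀ ζ ∈ closedSector θ₁ θ₂, ‖φhat ζ‖ ≤ A * Real.exp (c * ‖ζ‖))
    (hA0 : 0 ≤ A)
    {θ : ℝ} (h1 : θ₁ ≤ θ) (h2 : θ ≤ θ₂) {z₀ : ℂ} (hz : c < (z₀ * st4E θ).re) :
    DifferentiableAt ℂ (st4Lap φhat θ) z₀ := by
  set ρ := (z₀ * st4E θ).re with hρ
  set ε := (ρ - c)/2 with hεdef
  have hε0 : 0 < ε := by simp only [hεdef]; linarith
  set F : ℂ → ℝ → ℂ := fun z ξ =>
    Complex.exp (-z * ((ξ:ℂ) * st4E θ)) * φhat ((ξ:ℂ) * st4E θ) * st4E θ with hF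
  set F' : ℂ → ℝ → ℂ := fun z ξ =>
    Complex.exp (-z * ((ξ:ℂ) * st4E θ)) * (-1 * ((ξ:ℂ) * st4E θ)) *
      φhat ((ξ:ℂ) * st4E θ) * st4E θ with hF'
  have hmeasθ : ∀ z : ℂ, AEStronglyMeasurable (F z) (volume.restrict (Set.Ioi 0)) := fun z =>
    ((st4_cont hSU hφ h1 h2 z).mono Set.Ioi_subset_Ici_self).aestronglyMeasurable
      (μ := volume) measurableSet_Ioi
  have hF'cont : ContinuousOn (F' z₀) (Set.Ici 0) := by
    have hray : Continuous fun ξ : ℝ => (ξ:ℂ) * st4E θ :=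
      Complex.continuous_ofReal.mul continuous_const
    have hmap : Set.MapsTo (fun ξ : ℝ => (ξ:ℂ) * st4E θ) (Set.Ici 0) U :=
      fun ξ hξ => hSU (st4E_mem hξ h1 h2)
    exact ((((Complex.continuous_exp.comp (continuous_const.mul hray)).continuousOn.mul
      ((continuous_const.mul hray).continuousOn)).mul
      (hφ.continuousOn.comp hray.continuousOn hmap)).mul continuousOn_const)
  have hderiv : ∀ ξ : ℝ, ∀ z ∈ Metric.ball z₀ ε, HasDerivAt (fun z => F z ξ) (F' z ξ) z := by
    intro ξ z _
    have h0 : HasDerivAt (fun z : ℂ => -z * ((ξ:ℂ) * st4E θ)) (-1 * ((ξ:ℂ) * st4E θ)) z :=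
      (hasDerivAt_id z).neg.mul_const _
    exact (h0.cexp.mul_const _).mul_const _
  have hbound : ∀ᵐ ξ ∂(volume.restrict (Set.Ioi 0)), ∀ z ∈ Metric.ball z₀ ε,
      ‖F' z ξ‖ ≤ A * (ξ * Real.exp (-ε * ξ)) := by
    filter_upwards [ae_restrict_mem measurableSet_Ioi] with ξ hξ z hz'
    have hξ0 : (0:ℝ) ≤ ξ := le_of_lt hξ
    have hre : ρ - ε ≤ (z * st4E θ).re := by
      have h3 : |((z - z₀) * st4E θ).re| ≤ ‖z - z₀‖ := by
        calc |((z - z₀) * st4E θ).re| ≤ ‖(z - z₀) * st4E θ‖ := Complex.abs_re_le_norm _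
          _ = ‖z - z₀‖ := by rw [norm_mul, st4E_norm, mul_one]
      have h4 : ‖z - z₀‖ < ε := by rwa [Metric.mem_ball, dist_eq_norm] at hz'
      have h5 : ((z - z₀) * st4E θ).re = (z * st4E θ).re - ρ := by
        rw [hρ, sub_mul, Complex.sub_re]
      have := abs_le.mp h3
      linarith [this.1]
    have hnorm : ‖F' z ξ‖ ≤ ξ * (A * Real.exp ((c - (z * st4E θ).re) * ξ)) := by
      have hFb := st4_norm_integrand hbd h1 h2 z hξ0
      have : ‖F' z ξ‖ = ξ * ‖F z ξ‖ := by
        simp only [hF', hF]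
        rw [show Complex.exp (-z * ((ξ:ℂ) * st4E θ)) * (-1 * ((ξ:ℂ) * st4E θ)) *
              φhat ((ξ:ℂ) * st4E θ) * st4E θ
            = (-1 * ((ξ:ℂ) * st4E θ)) *
              (Complex.exp (-z * ((ξ:ℂ) * st4E θ)) * φhat ((ξ:ℂ) * st4E θ) * st4E θ) from by ring]
        rw [norm_mul, norm_mul, norm_neg, norm_one, one_mul, st4_norm_mul _ _ hξ0]
      rw [this]
      exact mul_le_mul_of_nonneg_left hFb hξ0
    have hexp : Real.exp ((c - (z * st4E θ).re) * ξ) ≤ Real.exp (-ε * ξ) := by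
      apply Real.exp_le_exp.mpr
      have : c - (z * st4E θ).re ≤ -ε := by
        have : c = ρ - 2*ε := by rw [hεdef]; ring
        linarith
      nlinarith
    calc ‖F' z ξ‖ ≤ ξ * (A * Real.exp ((c - (z * st4E θ).re) * ξ)) := hnorm
      _ ≤ ξ * (A * Real.exp (-ε * ξ)) := by
          refine mul_le_mul_of_nonneg_left ?_ hξ0
          exact mul_le_mul_of_nonneg_left hexp hA0
      _ = A * (ξ * Real.exp (-ε * ξ)) := by ring
  have hbint : Integrable (fun ξ : ℝ => A * (ξ * Real.exp (-ε * ξ)))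
      (volume.restrict (Set.Ioi 0)) := (st4_int_linexp hε0).const_mul A
  have key := hasDerivAt_integral_of_dominated_loc_of_deriv_le (Metric.ball_mem_nhds z₀ hε0)
    (Filter.Eventually.of_forall hmeasθ) (st4_integrable hSU hφ hbd h1 h2 hz)
    ((hF'cont.mono Set.Ioi_subset_Ici_self).aestronglyMeasurable (μ := volume) measurableSet_Ioi)
    hbound hbint (Filter.Eventually.of_forall hderiv)
  exact key.2.differentiableAt

lemma st4E_mul (a b : ℝ) : st4E a * st4E b = st4E (a + b) := by
  rw [st4E, st4E, st4E, ← Complex.exp_add]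
  congr 1
  push_cast
  ring

lemma st4E_re (θ : ℝ) : (st4E θ).re = Real.cos θ := by
  rw [st4E]; exact Complex.exp_ofReal_mul_I_re θ

lemma st4_halfplane_open (θ : ℝ) (c : ℝ) : IsOpen {z : ℂ | c < (z * st4E θ).re} :=
  isOpen_lt continuous_const (Complex.continuous_re.comp (continuous_mul_right _))

lemma st4_halfplane_convex (θ : ℝ) (c : ℝ) : Convex ℝ {z : ℂ | c < (z * st4E θ).re} := by
  apply convex_halfSpace_gt
  constructor
  · intro x y; rw [add_mul, Complex.add_re]
  · intro a x
    rw [Complex.real_smul, mul_assoc, Complex.re_ofReal_mul]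
    rfl

lemma st4_exp_decomp (w : ℂ) : Complex.exp w = (Real.exp w.re : ℂ) * st4E w.im := by
  conv_lhs => rw [← Complex.re_add_im w]
  rw [Complex.exp_add, Complex.ofReal_exp, st4E]

lemma st4_contour {θ₁ θ₂ c A : ℝ} {φhat : ℂ → ℂ} {U : Set ℂ}
    (hθ : 0 < θ₂ - θ₁) (hU : IsOpen U) (hSU : closedSector θ₁ θ₂ ⊆ U)
    (hφ : DifferentiableOn ℂ φhat U)
    (hbd : ∀ ζ ∈ closedSector θ₁ θ₂, ‖φhat ζ‖ ≤ A * Real.exp (c * ‖ζ‖)) (hA0 : 0 ≤ A)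
    (z : ℂ) (hz : ∀ θ, θ₁ ≤ θ → θ ≤ θ₂ → c + 1 ≤ (z * st4E θ).re) :
    st4Lap φhat θ₁ z = st4Lap φhat θ₂ z := by
  have hθ12 : θ₁ ≤ θ₂ := by linarith
  set g : ℂ → ℂ := fun w =>
    Complex.exp (-z * Complex.exp w) * φhat (Complex.exp w) * Complex.exp w with hg
  have hgd : DifferentiableOn ℂ g (Complex.exp ⁻¹' U) := by
    have h1 : DifferentiableOn ℂ (fun w => φhat (Complex.exp w)) (Complex.exp ⁻¹' U) :=
      hφ.comp Complex.differentiable_exp.differentiableOn (fun w hw => hw)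
    have h2 : Differentiable ℂ fun w : ℂ => Complex.exp (-z * Complex.exp w) :=
      Complex.differentiable_exp.comp (Complex.differentiable_exp.const_mul (-z))
    exact (h2.differentiableOn.mul h1).mul Complex.differentiable_exp.differentiableOn
  -- rectangle identity
  have hrect : ∀ n : ℕ,
      (∫ x in (-(n:ℝ))..(n:ℝ), g (↑x + ↑θ₁ * Complex.I)) -
        (∫ x in (-(n:ℝ))..(n:ℝ), g (↑x + ↑θ₂ * Complex.I)) +
        Complex.I • (∫ y in θ₁..θ₂, g (↑(n:ℝ) + ↑y * Complex.I)) -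
        Complex.I • (∫ y in θ₁..θ₂, g (↑(-(n:ℝ)) + ↑y * Complex.I)) = 0 := by
    intro n
    set p : ℂ := ↑(-(n:ℝ)) + ↑θ₁ * Complex.I with hp
    set q : ℂ := ↑(n:ℝ) + ↑θ₂ * Complex.I with hq
    have hpre : p.re = -(n:ℝ) := by simp [hp]
    have hpim : p.im = θ₁ := by simp [hp]
    have hqre : q.re = (n:ℝ) := by simp [hq]
    have hqim : q.im = θ₂ := by simp [hq]
    have hdiff : DifferentiableOn ℂ g (Set.uIcc p.re q.re ×ℂ Set.uIcc p.im q.im) := by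
      refine hgd.mono fun w hw => ?_
      rw [Complex.mem_reProdIm] at hw
      have him : w.im ∈ Set.Icc θ₁ θ₂ := by
        rw [hpim, hqim, Set.uIcc_of_le hθ12] at hw
        exact hw.2
      show Complex.exp w ∈ U
      rw [st4_exp_decomp w]
      exact hSU (st4E_mem (Real.exp_pos _).le him.1 him.2)
    have key := Complex.integral_boundary_rect_eq_zero_of_differentiableOn g p q hdiff
    rw [hpre, hpim, hqre, hqim] at key
    exact key
  -- change of variables on horizontal segments
  have hcv : ∀ θ, θ₁ ≤ θ → θ ≤ θ₂ → ∀ a b : ℝ,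
      (∫ x in a..b, g (↑x + ↑θ * Complex.I)) =
        ∫ ξ in Real.exp a..Real.exp b,
          Complex.exp (-z * ((ξ:ℂ) * st4E θ)) * φhat ((ξ:ℂ) * st4E θ) * st4E θ := by
    intro θ hb1 hb2 a b
    have hcont : ContinuousOn
        (fun ξ : ℝ => Complex.exp (-z * ((ξ:ℂ) * st4E θ)) * φhat ((ξ:ℂ) * st4E θ) * st4E θ)
        (Real.exp '' Set.uIcc a b) := by
      refine (st4_cont hSU hφ hb1 hb2 z).mono ?_
      rintro t ⟨x, -, rfl⟩
      exact (Real.exp_pos x).le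
    have h := intervalIntegral.integral_comp_smul_deriv'
      (f := Real.exp) (f' := Real.exp)
      (g := fun ξ : ℝ => Complex.exp (-z * ((ξ:ℂ) * st4E θ)) * φhat ((ξ:ℂ) * st4E θ) * st4E θ)
      (fun x _ => Real.hasDerivAt_exp x) Real.continuous_exp.continuousOn hcont
    rw [← h]
    apply intervalIntegral.integral_congr
    intro x hx
    have hxe : Complex.exp ((x:ℂ) + ↑θ * Complex.I) = (Real.exp x : ℂ) * st4E θ := by
      rw [st4_exp_decomp]
      norm_num
    show g (↑x + ↑θ * Complex.I) = Real.exp x • _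
    rw [hg]
    simp only [Function.comp_apply]
    rw [hxe, Complex.real_smul]
    ring
  -- horizontal limits
  have hH : ∀ θ, θ₁ ≤ θ → θ ≤ θ₂ →
      Filter.Tendsto (fun n : ℕ => ∫ x in (-(n:ℝ))..(n:ℝ), g (↑x + ↑θ * Complex.I))
        Filter.atTop (nhds (st4Lap φhat θ z)) := by
    intro θ hb1 hb2
    have hint := st4_integrable hSU hφ hbd hb1 hb2 (z := z) (by linarith [hz θ hb1 hb2])
    have hmono : Monotone (fun n : ℕ => Set.Ioc (Real.exp (-(n:ℝ))) (Real.exp (n:ℝ))) := by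
      intro m n hmn
      have h1 : (m:ℝ) ≤ (n:ℝ) := by exact_mod_cast hmn
      exact Set.Ioc_subset_Ioc (Real.exp_le_exp.mpr (by linarith)) (Real.exp_le_exp.mpr h1)
    have hunion : (⋃ n : ℕ, Set.Ioc (Real.exp (-(n:ℝ))) (Real.exp (n:ℝ))) = Set.Ioi 0 := by
      ext x
      simp only [Set.mem_iUnion, Set.mem_Ioc, Set.mem_Ioi]
      constructor
      · rintro ⟨n, h1, -⟩; exact lt_trans (Real.exp_pos _) h1
      · intro hx
        obtain ⟨n, hn⟩ := exists_nat_gt |Real.log x|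
        have habs := abs_lt.mp hn
        exact ⟨n, by rw [← Real.exp_log hx]; exact Real.exp_lt_exp.mpr (by linarith [habs.1]),
          by rw [← Real.exp_log hx]; exact Real.exp_le_exp.mpr habs.2.le⟩
    have htend := MeasureTheory.tendsto_setIntegral_of_monotone
      (fun n : ℕ => measurableSet_Ioc) hmono (by rw [hunion]; exact hint)
    rw [hunion] at htend
    have : ∀ n : ℕ, (∫ x in (-(n:ℝ))..(n:ℝ), g (↑x + ↑θ * Complex.I))
        = ∫ ξ in Set.Ioc (Real.exp (-(n:ℝ))) (Real.exp (n:ℝ)),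
            Complex.exp (-z * ((ξ:ℂ) * st4E θ)) * φhat ((ξ:ℂ) * st4E θ) * st4E θ := by
      intro n
      rw [hcv θ hb1 hb2, intervalIntegral.integral_of_le
        (Real.exp_le_exp.mpr (by push_cast; linarith [Nat.cast_nonneg (α := ℝ) n]))]
    rw [show st4Lap φhat θ z = ∫ ξ in Set.Ioi (0:ℝ),
        Complex.exp (-z * ((ξ:ℂ) * st4E θ)) * φhat ((ξ:ℂ) * st4E θ) * st4E θ from rfl]
    exact Filter.Tendsto.congr (fun n => (this n).symm) htend
  -- pointwise bound on g along vertical lines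
  have hgb : ∀ (x θ : ℝ), θ₁ ≤ θ → θ ≤ θ₂ →
      ‖g (↑x + ↑θ * Complex.I)‖
        ≤ A * (Real.exp ((c - (z * st4E θ).re) * Real.exp x) * Real.exp x) := by
    intro x θ hb1 hb2
    have hxe : Complex.exp ((x:ℂ) + ↑θ * Complex.I) = (Real.exp x : ℂ) * st4E θ := by
      rw [st4_exp_decomp]; norm_num
    have hsplit : g (↑x + ↑θ * Complex.I)
        = (Complex.exp (-z * ((Real.exp x : ℂ) * st4E θ)) * φhat ((Real.exp x : ℂ) * st4E θ)
            * st4E θ) * (Real.exp x : ℂ) := by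
      rw [hg]; simp only; rw [hxe]; ring
    rw [hsplit, norm_mul, Complex.norm_real, Real.norm_of_nonneg (Real.exp_pos x).le]
    have := st4_norm_integrand hbd hb1 hb2 z (ξ := Real.exp x) (Real.exp_pos x).le
    calc _ ≤ (A * Real.exp ((c - (z * st4E θ).re) * Real.exp x)) * Real.exp x :=
          mul_le_mul_of_nonneg_right this (Real.exp_pos x).le
      _ = A * (Real.exp ((c - (z * st4E θ).re) * Real.exp x) * Real.exp x) := by ring
  -- vertical integrals tend to zero
  have hexp2x : ∀ x : ℝ, 0 ≤ x → 2 * x ≤ Real.exp x := by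
    intro x hx
    have hsq : Real.exp x = Real.exp (x/2) * Real.exp (x/2) := by
      rw [← Real.exp_add]; ring_nf
    nlinarith [Real.add_one_le_exp (x/2), sq_nonneg (x/2 - 1), Real.exp_nonneg (x/2)]
  have hnegtend : Filter.Tendsto (fun n : ℕ => -(n:ℝ)) Filter.atTop Filter.atBot :=
    tendsto_neg_atBot_iff.mpr tendsto_natCast_atTop_atTop
  have hVb : Filter.Tendsto (fun n : ℕ => ∫ y in θ₁..θ₂, g (↑(n:ℝ) + ↑y * Complex.I))
      Filter.atTop (nhds 0) := by
    apply squeeze_zero_norm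
      (a := fun n : ℕ => A * (Real.exp (-Real.exp (n:ℝ)) * Real.exp (n:ℝ)) * |θ₂ - θ₁|)
    · intro n
      apply intervalIntegral.norm_integral_le_of_norm_le_const
      intro y hy
      rw [Set.uIoc_of_le hθ12] at hy
      refine (hgb (n:ℝ) y hy.1.le hy.2).trans ?_
      have hc : c - (z * st4E y).re ≤ -1 := by linarith [hz y hy.1.le hy.2]
      have h1 : (c - (z * st4E y).re) * Real.exp (n:ℝ) ≤ -Real.exp (n:ℝ) := by
        nlinarith [Real.exp_pos ((n:ℝ))]
      have h2 := Real.exp_le_exp.mpr h1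
      exact mul_le_mul_of_nonneg_left
        (mul_le_mul_of_nonneg_right h2 (Real.exp_pos _).le) hA0
    · have h1 : Filter.Tendsto (fun n : ℕ => (n:ℝ) - Real.exp (n:ℝ)) Filter.atTop
          Filter.atBot := by
        apply tendsto_atBot_mono ?_ hnegtend
        intro n
        have := hexp2x (n:ℝ) (Nat.cast_nonneg n)
        linarith
      have h2 : Filter.Tendsto (fun n : ℕ => Real.exp ((n:ℝ) - Real.exp (n:ℝ)))
          Filter.atTop (nhds 0) := Real.tendsto_exp_atBot.comp h1
      have h3 := h2.const_mul (A * |θ₂ - θ₁|)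
      rw [mul_zero] at h3
      refine h3.congr fun n => ?_
      rw [show (n:ℝ) - Real.exp (n:ℝ) = -Real.exp (n:ℝ) + (n:ℝ) from by ring, Real.exp_add]
      ring
  have hVa : Filter.Tendsto (fun n : ℕ => ∫ y in θ₁..θ₂, g (↑(-(n:ℝ)) + ↑y * Complex.I))
      Filter.atTop (nhds 0) := by
    have hM0 : (0:ℝ) ≤ |c| + ‖z‖ := by positivity
    apply squeeze_zero_norm
      (a := fun n : ℕ => A * (Real.exp (|c| + ‖z‖) * Real.exp (-(n:ℝ))) * |θ₂ - θ₁|)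
    · intro n
      apply intervalIntegral.norm_integral_le_of_norm_le_const
      intro y hy
      rw [Set.uIoc_of_le hθ12] at hy
      refine (hgb (-(n:ℝ)) y hy.1.le hy.2).trans ?_
      have hρ : |(z * st4E y).re| ≤ ‖z‖ := by
        calc |(z * st4E y).re| ≤ ‖z * st4E y‖ := Complex.abs_re_le_norm _
          _ = ‖z‖ := by rw [norm_mul, st4E_norm, mul_one]
      have hcM : c - (z * st4E y).re ≤ |c| + ‖z‖ := by
        have := abs_le.mp hρ
        linarith [le_abs_self c]
      have hle1 : Real.exp (-(n:ℝ)) ≤ 1 :=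
        Real.exp_le_one_iff.mpr (by simp)
      have harg : (c - (z * st4E y).re) * Real.exp (-(n:ℝ)) ≤ |c| + ‖z‖ := by
        nlinarith [Real.exp_pos (-(n:ℝ)),
          mul_le_mul_of_nonneg_right hcM (Real.exp_pos (-(n:ℝ))).le]
      exact mul_le_mul_of_nonneg_left
        (mul_le_mul_of_nonneg_right (Real.exp_le_exp.mpr harg) (Real.exp_pos _).le) hA0
    · have h2 : Filter.Tendsto (fun n : ℕ => Real.exp (-(n:ℝ))) Filter.atTop (nhds 0) :=
        Real.tendsto_exp_atBot.comp hnegtend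
      have h3 := h2.const_mul (A * Real.exp (|c| + ‖z‖) * |θ₂ - θ₁|)
      rw [mul_zero] at h3
      refine h3.congr fun n => ?_
      ring
  -- assemble
  have hsub : Filter.Tendsto (fun n : ℕ =>
      (∫ x in (-(n:ℝ))..(n:ℝ), g (↑x + ↑θ₁ * Complex.I)) -
        (∫ x in (-(n:ℝ))..(n:ℝ), g (↑x + ↑θ₂ * Complex.I)))
      Filter.atTop (nhds (st4Lap φhat θ₁ z - st4Lap φhat θ₂ z)) :=
    (hH θ₁ le_rfl hθ12).sub (hH θ₂ hθ12 le_rfl)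
  have hrw : ∀ n : ℕ,
      (∫ x in (-(n:ℝ))..(n:ℝ), g (↑x + ↑θ₁ * Complex.I)) -
        (∫ x in (-(n:ℝ))..(n:ℝ), g (↑x + ↑θ₂ * Complex.I))
      = Complex.I * (∫ y in θ₁..θ₂, g (↑(-(n:ℝ)) + ↑y * Complex.I)) -
          Complex.I * (∫ y in θ₁..θ₂, g (↑(n:ℝ) + ↑y * Complex.I)) := by
    intro n
    have := hrect n
    rw [smul_eq_mul, smul_eq_mul] at this
    linear_combination this
  have hzero : Filter.Tendsto (fun n : ℕ =>
      Complex.I * (∫ y in θ₁..θ₂, g (↑(-(n:ℝ)) + ↑y * Complex.I)) -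
        Complex.I * (∫ y in θ₁..θ₂, g (↑(n:ℝ) + ↑y * Complex.I)))
      Filter.atTop (nhds 0) := by
    have := (hVa.const_mul Complex.I).sub (hVb.const_mul Complex.I)
    simpa using this
  have := tendsto_nhds_unique (hsub.congr hrw) hzero
  exact sub_eq_zero.mp this

lemma st4E_def (θ : ℝ) : Complex.exp ((θ:ℂ) * Complex.I) = st4E θ := rfl

end st4aux

/-- Laplace transforms in two directions at angular distance less than `π` of a function
holomorphic with exponential growth on the corresponding closed sector coincide on the
(nonempty) intersection of their half-planes of convergence. -/
theorem stmt_4 (θ₁ θ₂ c A : ℝ) (hθ : 0 < θ₂ - θ₁) (hθπ : θ₂ - θ₁ < Real.pi) (hA : 0 < A)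
    (φhat : ℂ → ℂ) (U : Set ℂ) (hU : IsOpen U) (hSU : closedSector θ₁ θ₂ ⊆ U)
    (hφ : DifferentiableOn ℂ φhat U)
    (hbd : ∀ ζ ∈ closedSector θ₁ θ₂, ‖φhat ζ‖ ≤ A * Real.exp (c * ‖ζ‖)) :
    {z : ℂ | c < (z * Complex.exp ((θ₁ : ℂ) * Complex.I)).re ∧
        c < (z * Complex.exp ((θ₂ : ℂ) * Complex.I)).re}.Nonempty ∧
      ∀ z : ℂ, c < (z * Complex.exp ((θ₁ : ℂ) * Complex.I)).re →
        c < (z * Complex.exp ((θ₂ : ℂ) * Complex.I)).re →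
        (∫ ξ in Set.Ioi (0:ℝ),
            Complex.exp (-z * ((ξ : ℂ) * Complex.exp ((θ₁ : ℂ) * Complex.I))) *
              φhat ((ξ : ℂ) * Complex.exp ((θ₁ : ℂ) * Complex.I)) *
              Complex.exp ((θ₁ : ℂ) * Complex.I)) =
          ∫ ξ in Set.Ioi (0:ℝ),
            Complex.exp (-z * ((ξ : ℂ) * Complex.exp ((θ₂ : ℂ) * Complex.I))) *
              φhat ((ξ : ℂ) * Complex.exp ((θ₂ : ℂ) * Complex.I)) *
              Complex.exp ((θ₂ : ℂ) * Complex.I) := by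
  have hA0 : (0:ℝ) ≤ A := hA.le
  have hθ12 : θ₁ ≤ θ₂ := by linarith
  set β := (θ₂ - θ₁)/2 with hβ
  have hβ0 : 0 < β := by rw [hβ]; linarith
  have hβπ : β < Real.pi/2 := by rw [hβ]; linarith
  have hcos : 0 < Real.cos β :=
    Real.cos_pos_of_mem_Ioo ⟨by linarith [Real.pi_pos], hβπ⟩
  set R := (|c| + 2) / Real.cos β with hR
  set z₀ : ℂ := (R:ℂ) * st4E (-(θ₁+θ₂)/2) with hz₀
  have hz₀j : ∀ θ : ℝ, (z₀ * st4E θ).re = R * Real.cos (-(θ₁+θ₂)/2 + θ) := by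
    intro θ
    rw [hz₀, mul_assoc, st4E_mul, Complex.re_ofReal_mul, st4E_re]
  have hre1 : (z₀ * st4E θ₁).re = |c| + 2 := by
    have e : -(θ₁+θ₂)/2 + θ₁ = -β := by rw [hβ]; ring
    rw [hz₀j, e, Real.cos_neg, hR, div_mul_cancel₀ _ hcos.ne']
  have hre2 : (z₀ * st4E θ₂).re = |c| + 2 := by
    have e : -(θ₁+θ₂)/2 + θ₂ = β := by rw [hβ]; ring
    rw [hz₀j, e, hR, div_mul_cancel₀ _ hcos.ne']
  have habs : c ≤ |c| := le_abs_self c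
  constructor
  · refine ⟨z₀, ?_, ?_⟩
    · show c < (z₀ * Complex.exp ((θ₁:ℂ) * Complex.I)).re
      rw [st4E_def, hre1]; linarith
    · show c < (z₀ * Complex.exp ((θ₂:ℂ) * Complex.I)).re
      rw [st4E_def, hre2]; linarith
  · intro z hz1 hz2
    rw [st4E_def] at hz1 hz2
    set S := {w : ℂ | c < (w * st4E θ₁).re} ∩ {w : ℂ | c < (w * st4E θ₂).re} with hS
    have hSopen : IsOpen S := (st4_halfplane_open θ₁ c).inter (st4_halfplane_open θ₂ c)
    have hSpre : IsPreconnected S :=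
      ((st4_halfplane_convex θ₁ c).inter (st4_halfplane_convex θ₂ c)).isPreconnected
    have han1 : AnalyticOnNhd ℂ (st4Lap φhat θ₁) S := by
      refine DifferentiableOn.analyticOnNhd (fun w hw => ?_) hSopen
      exact (st4_lap_diffAt hSU hφ hbd hA0 le_rfl hθ12 hw.1).differentiableWithinAt
    have han2 : AnalyticOnNhd ℂ (st4Lap φhat θ₂) S := by
      refine DifferentiableOn.analyticOnNhd (fun w hw => ?_) hSopen
      exact (st4_lap_diffAt hSU hφ hbd hA0 hθ12 le_rfl hw.2).differentiableWithinAt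
    set S₀ := {w : ℂ | |c| + 1 < (w * st4E θ₁).re} ∩ {w : ℂ | |c| + 1 < (w * st4E θ₂).re}
      with hS₀
    have hS₀open : IsOpen S₀ :=
      (st4_halfplane_open θ₁ (|c|+1)).inter (st4_halfplane_open θ₂ (|c|+1))
    have hz₀S₀ : z₀ ∈ S₀ := by
      constructor
      · show |c| + 1 < (z₀ * st4E θ₁).re; rw [hre1]; linarith
      · show |c| + 1 < (z₀ * st4E θ₂).re; rw [hre2]; linarith
    have hz₀S : z₀ ∈ S := by
      constructor
      · show c < (z₀ * st4E θ₁).re; rw [hre1]; linarith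
      · show c < (z₀ * st4E θ₂).re; rw [hre2]; linarith
    have heqS₀ : Set.EqOn (st4Lap φhat θ₁) (st4Lap φhat θ₂) S₀ := by
      intro w hw
      apply st4_contour hθ hU hSU hφ hbd hA0
      intro θ hb1 hb2
      have hm : (0:ℝ) ≤ |c| + 1 := by positivity
      have := st4_cone_re hb1 hb2 hθ hθπ w hm hw.1.le hw.2.le
      linarith
    have hev : st4Lap φhat θ₁ =ᶠ[nhds z₀] st4Lap φhat θ₂ :=
      Filter.eventuallyEq_of_mem (hS₀open.mem_nhds hz₀S₀) heqS₀
    have hfinal := han1.eqOn_of_preconnected_of_eventuallyEq han2 hSpre hz₀S hev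
    have := hfinal (Set.mem_inter hz1 hz2)
    simp only [st4E_def]
    exact this
end

section
/- Let (a_n) be a sequence of complex numbers and A, c > 0 with |a_n| ≤ A·c^n for all n, so that F(ζ) := Σ_{n≥0} a_n ζ^n/n! defines an entire function. Then for every θ ∈ ℝ and every z ∈ ℂ with Re(z·e^{iθ}) > c, the integral ∫₀^{+∞} e^{−z·ξe^{iθ}} F(ξe^{iθ}) e^{iθ} dξ converges and equals the sum of the convergent series Σ_{n≥0} a_n z^{−n−1}. -/
open MeasureTheory Set Filter Real Topology


lemma aux_real_integrable {r : ℝ} (hr : 0 < r) (n : ℕ) :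
    IntegrableOn (fun ξ : ℝ => ξ ^ n * Real.exp (-(r * ξ))) (Set.Ioi 0) := by
  have hcont : Continuous fun ξ : ℝ => ξ ^ n * Real.exp (-(r * ξ)) := by
    exact (continuous_pow n).mul (Real.continuous_exp.comp (continuous_const.mul continuous_id).neg)
  apply integrable_of_isBigO_exp_neg (half_pos hr) hcont.continuousOn
  rw [Asymptotics.isBigO_iff]
  refine ⟨1, ?_⟩
  have h0 := tendsto_rpow_mul_exp_neg_mul_atTop_nhds_zero n (r/2) (half_pos hr)
  have h1 : ∀ᶠ x : ℝ in atTop, x ^ (n : ℝ) * Real.exp (-(r/2) * x) ≤ 1 :=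
    h0.eventually_le_const one_pos
  filter_upwards [h1, eventually_ge_atTop (0:ℝ)] with x hx hx0
  have hsplit : Real.exp (-(r * x)) = Real.exp (-(r/2) * x) * Real.exp (-(r/2) * x) := by
    rw [← Real.exp_add]; ring_nf
  have hxp : x ^ (n:ℝ) = x ^ n := Real.rpow_natCast x n
  rw [hxp] at hx
  have he : (0:ℝ) < Real.exp (-(r/2)*x) := Real.exp_pos _
  rw [Real.norm_eq_abs, Real.norm_eq_abs, abs_of_nonneg (by positivity), abs_of_nonneg he.le,
    hsplit, ← mul_assoc]
  exact mul_le_mul_of_nonneg_right hx he.le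

lemma aux_real_integral {r : ℝ} (hr : 0 < r) (n : ℕ) :
    ∫ ξ in Set.Ioi (0:ℝ), ξ ^ n * Real.exp (-(r * ξ)) = n.factorial / r ^ (n + 1) := by
  have h := Real.integral_rpow_mul_exp_neg_mul_Ioi (a := (n:ℝ)+1) (by positivity) hr
  have h2 : ∀ ξ ∈ Set.Ioi (0:ℝ), ξ ^ ((n:ℝ) + 1 - 1) * Real.exp (-(r * ξ))
      = ξ ^ n * Real.exp (-(r * ξ)) := by
    intro ξ hξ
    rw [show (n:ℝ) + 1 - 1 = (n:ℝ) by ring, Real.rpow_natCast]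
  rw [setIntegral_congr_fun measurableSet_Ioi h2] at h
  rw [h, Real.Gamma_nat_eq_factorial,
    show (n:ℝ) + 1 = ((n+1 : ℕ) : ℝ) by push_cast; ring, Real.rpow_natCast]
  field_simp
  rw [← mul_pow, one_div_mul_cancel hr.ne', one_pow]

lemma aux_cx_norm (w : ℂ) (n : ℕ) {ξ : ℝ} (hξ : 0 ≤ ξ) :
    ‖(ξ:ℂ) ^ n * Complex.exp (-(w * ξ))‖ = ξ ^ n * Real.exp (-(w.re * ξ)) := by
  rw [norm_mul, norm_pow, Complex.norm_of_nonneg hξ, Complex.norm_exp]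
  congr 2
  simp [Complex.mul_re]

lemma aux_cx_integrable {w : ℂ} (hw : 0 < w.re) (n : ℕ) :
    IntegrableOn (fun ξ : ℝ => (ξ:ℂ) ^ n * Complex.exp (-(w * ξ))) (Set.Ioi 0) := by
  have hcont : Continuous fun ξ : ℝ => (ξ:ℂ) ^ n * Complex.exp (-(w * ξ)) := by
    exact (Complex.continuous_ofReal.pow n).mul
      (Complex.continuous_exp.comp (continuous_const.mul Complex.continuous_ofReal).neg)
  refine (aux_real_integrable hw n).mono' hcont.aestronglyMeasurable.restrict ?_
  rw [ae_restrict_iff' measurableSet_Ioi]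
  filter_upwards with ξ hξ
  rw [aux_cx_norm w n (le_of_lt hξ)]

lemma aux_tendsto_zero {w : ℂ} (hw : 0 < w.re) (m : ℕ) :
    Tendsto (fun ξ : ℝ => -((ξ:ℂ) ^ m * Complex.exp (-(w * ξ))) / w) atTop (𝓝 0) := by
  apply squeeze_zero_norm' (a := fun ξ : ℝ => ξ ^ (m:ℝ) * Real.exp (-w.re * ξ) / ‖w‖)
  · filter_upwards [eventually_ge_atTop (0:ℝ)] with ξ hξ
    rw [norm_div, norm_neg, aux_cx_norm w m hξ, Real.rpow_natCast]
    ring_nf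
    exact le_refl _
  · simpa using (tendsto_rpow_mul_exp_neg_mul_atTop_nhds_zero m w.re hw).div_const ‖w‖

lemma aux_cx_integral {w : ℂ} (hw : 0 < w.re) : ∀ n : ℕ,
    ∫ ξ in Set.Ioi (0:ℝ), (ξ:ℂ) ^ n * Complex.exp (-(w * ξ)) = n.factorial / w ^ (n + 1) := by
  have hw0 : w ≠ 0 := fun h => by simp [h] at hw
  intro n
  induction n with
  | zero =>
    have hderiv : ∀ x ∈ Set.Ici (0:ℝ),
        HasDerivAt (fun ξ : ℝ => -(((ξ:ℂ) ^ 0) * Complex.exp (-(w * ξ))) / w)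
          ((x:ℂ) ^ 0 * Complex.exp (-(w * x))) x := by
      intro x _
      have h : HasDerivAt (fun ζ : ℂ => -((ζ ^ 0) * Complex.exp (-(w * ζ))) / w)
          ((x:ℂ) ^ 0 * Complex.exp (-(w * x))) (x:ℂ) := by
        have h2 := (((hasDerivAt_id (x:ℂ)).const_mul w).neg.cexp)
        have h3 : HasDerivAt (fun ζ : ℂ => -(Complex.exp (-(w * ζ))) / w)
            (-(Complex.exp (-(w * (x:ℂ))) * -(w * 1)) / w) (x:ℂ) := h2.neg.div_const w
        have h4 : -(Complex.exp (-(w * (x:ℂ))) * -(w * 1)) / w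
            = (x:ℂ) ^ 0 * Complex.exp (-(w * x)) := by field_simp
        rw [h4] at h3
        convert h3 using 2 with ζ
        simp
      exact h.comp_ofReal
    have h := integral_Ioi_of_hasDerivAt_of_tendsto' hderiv
      (aux_cx_integrable hw 0) (aux_tendsto_zero hw 0)
    rw [h]
    simp [Complex.exp_zero]
    field_simp
  | succ n ih =>
    have hderiv : ∀ x ∈ Set.Ici (0:ℝ),
        HasDerivAt (fun ξ : ℝ => -(((ξ:ℂ) ^ (n+1)) * Complex.exp (-(w * ξ))) / w)
          ((x:ℂ) ^ (n+1) * Complex.exp (-(w * x))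
            - (((n:ℂ)+1) / w) * ((x:ℂ) ^ n * Complex.exp (-(w * x)))) x := by
      intro x hx
      have h : HasDerivAt (fun ζ : ℂ => -((ζ ^ (n+1)) * Complex.exp (-(w * ζ))) / w)
          ((x:ℂ) ^ (n+1) * Complex.exp (-(w * x))
            - (((n:ℂ)+1) / w) * ((x:ℂ) ^ n * Complex.exp (-(w * x)))) (x:ℂ) := by
        have h1 := hasDerivAt_pow (n+1) (x:ℂ)
        have h2 := (((hasDerivAt_id (x:ℂ)).const_mul w).neg.cexp)
        have h3 := (h1.mul h2).neg.div_const w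
        refine h3.congr_deriv ?_
        simp only [Nat.add_sub_cancel, id_eq, Nat.cast_add, Nat.cast_one, Pi.neg_apply]
        field_simp
        ring
      exact h.comp_ofReal
    have hint : IntegrableOn (fun x : ℝ => (x:ℂ) ^ (n+1) * Complex.exp (-(w * x))
        - (((n:ℂ)+1) / w) * ((x:ℂ) ^ n * Complex.exp (-(w * x)))) (Set.Ioi (0:ℝ)) :=
      (aux_cx_integrable hw (n+1)).sub ((aux_cx_integrable hw n).const_mul _)
    have h := integral_Ioi_of_hasDerivAt_of_tendsto' hderiv hint (aux_tendsto_zero hw (n+1))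
    rw [integral_sub (aux_cx_integrable hw (n+1)) ((aux_cx_integrable hw n).const_mul _),
      integral_const_mul, ih] at h
    have h5 : (∫ ξ in Set.Ioi (0:ℝ), (ξ:ℂ) ^ (n+1) * Complex.exp (-(w * ξ)))
        = (((n:ℂ)+1) / w) * ((n.factorial : ℂ) / w ^ (n+1)) := by
      have h6 : (0:ℂ) - -(((0:ℝ):ℂ) ^ (n+1) * Complex.exp (-(w * (0:ℝ)))) / w = 0 := by
        simp
      rw [h6] at h
      exact sub_eq_zero.mp h
    rw [h5, Nat.factorial_succ]
    push_cast
    rw [div_mul_div_comm, pow_succ]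
    ring

lemma aux_exp_tsum (x : ℝ) : ∑' n : ℕ, x ^ n / n.factorial = Real.exp x := by
  rw [Real.exp_eq_exp_ℝ, NormedSpace.exp_eq_tsum ℝ]
  exact tsum_congr fun n => by rw [smul_eq_mul, div_eq_inv_mul]

/-- The Borel sum of a convergent formal series coincides with its ordinary sum: if
`|aₙ| ≤ A cⁿ` and `F` is the entire function `Σ aₙ ζⁿ/n!`, then for any direction `θ`
and any `z` with `Re(z e^{iθ}) > c`, the Laplace integral of `F` in the direction `θ`
converges and equals `Σ aₙ z^{-n-1}`. -/
theorem stmt_5 (a : ℕ → ℂ) (A c : ℝ) (hA : 0 < A) (hc : 0 < c)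
    (hbd : ∀ n : ℕ, ‖a n‖ ≤ A * c ^ n) (θ : ℝ) (z : ℂ)
    (hz : c < (z * Complex.exp ((θ : ℂ) * Complex.I)).re) :
    IntegrableOn
        (fun ξ : ℝ => Complex.exp (-z * ((ξ : ℂ) * Complex.exp ((θ : ℂ) * Complex.I))) *
          (∑' n : ℕ, a n * ((ξ : ℂ) * Complex.exp ((θ : ℂ) * Complex.I)) ^ n /
            (Nat.factorial n : ℂ)) * Complex.exp ((θ : ℂ) * Complex.I))
        (Set.Ioi (0:ℝ)) ∧
      Summable (fun n : ℕ => a n / z ^ (n + 1)) ∧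
      (∫ ξ in Set.Ioi (0:ℝ),
          Complex.exp (-z * ((ξ : ℂ) * Complex.exp ((θ : ℂ) * Complex.I))) *
            (∑' n : ℕ, a n * ((ξ : ℂ) * Complex.exp ((θ : ℂ) * Complex.I)) ^ n /
              (Nat.factorial n : ℂ)) * Complex.exp ((θ : ℂ) * Complex.I)) =
        ∑' n : ℕ, a n / z ^ (n + 1) := by
  set e : ℂ := Complex.exp ((θ : ℂ) * Complex.I) with he
  set w : ℂ := z * e with hwdef
  set r : ℝ := w.re with hrdef
  have hr : c < r := hz
  have hr0 : 0 < r := hc.trans hr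
  have he0 : e ≠ 0 := Complex.exp_ne_zero _
  have he1 : ‖e‖ = 1 := by
    rw [he, Complex.norm_exp]
    simp
  have hw0 : w ≠ 0 := fun h => by rw [hrdef, h] at hr0; simp at hr0
  have hz0 : z ≠ 0 := fun h => hw0 (by rw [hwdef, h, zero_mul])
  -- the terms
  set f : ℕ → ℝ → ℂ := fun n ξ =>
    Complex.exp (-z * ((ξ : ℂ) * e)) * (a n * ((ξ : ℂ) * e) ^ n / (n.factorial : ℂ)) * e
    with hf
  have hfe : ∀ n : ℕ, f n = fun ξ : ℝ =>
      (a n * e ^ (n+1) / (n.factorial : ℂ)) * ((ξ:ℂ) ^ n * Complex.exp (-(w * ξ))) := by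
    intro n
    funext ξ
    have h1 : -z * ((ξ : ℂ) * e) = -(w * ξ) := by rw [hwdef]; ring
    simp only [hf]
    rw [h1, mul_pow]
    ring
  have hfnorm : ∀ n : ℕ, ∀ ξ ∈ Set.Ioi (0:ℝ),
      ‖f n ξ‖ = (‖a n‖ / n.factorial) * (ξ ^ n * Real.exp (-(r * ξ))) := by
    intro n ξ hξ
    rw [hfe n, norm_mul, aux_cx_norm w n (le_of_lt hξ), norm_div, norm_mul, norm_pow, he1,
      one_pow, mul_one]
    simp only [Complex.norm_natCast]
    rfl
  have hf_int : ∀ n : ℕ, Integrable (f n) (volume.restrict (Set.Ioi (0:ℝ))) := by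
    intro n
    rw [hfe n]
    exact ((aux_cx_integrable (w := w) hr0 n).const_mul _)
  have hf_val : ∀ n : ℕ, (∫ ξ in Set.Ioi (0:ℝ), f n ξ) = a n / z ^ (n+1) := by
    intro n
    rw [hfe n, integral_const_mul, aux_cx_integral (w := w) hr0 n, hwdef, mul_pow]
    have hfac : ((n.factorial : ℂ)) ≠ 0 := Nat.cast_ne_zero.mpr n.factorial_ne_zero
    field_simp
  have hf_nval : ∀ n : ℕ, (∫ ξ in Set.Ioi (0:ℝ), ‖f n ξ‖) = ‖a n‖ / r ^ (n+1) := by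
    intro n
    rw [setIntegral_congr_fun measurableSet_Ioi (hfnorm n), integral_const_mul,
      aux_real_integral hr0 n]
    have hfac : ((n.factorial : ℝ)) ≠ 0 := Nat.cast_ne_zero.mpr n.factorial_ne_zero
    field_simp
  have hgeo : Summable (fun n : ℕ => (A / r) * (c / r) ^ n) := by
    apply Summable.mul_left
    apply summable_geometric_of_lt_one (by positivity)
    rw [div_lt_one hr0]; exact hr
  have hsum_norm : Summable (fun n : ℕ => ∫ ξ in Set.Ioi (0:ℝ), ‖f n ξ‖) := by
    rw [summable_congr hf_nval]
    apply hgeo.of_nonneg_of_le (fun n => by positivity)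
    intro n
    have hrw : (A/r) * (c/r) ^ n = (A * c ^ n) / r ^ (n+1) := by
      rw [div_pow, div_mul_div_comm, pow_succ']
    rw [hrw]
    gcongr
    exact hbd n
  -- pointwise identification of the integrand with the tsum of f
  have ptw : ∀ ξ : ℝ, (∑' n : ℕ, f n ξ) =
      Complex.exp (-z * ((ξ : ℂ) * e)) *
        (∑' n : ℕ, a n * ((ξ : ℂ) * e) ^ n / (n.factorial : ℂ)) * e := by
    intro ξ
    simp only [hf]
    rw [tsum_mul_right, tsum_mul_left]
  -- summability of the term norms, with explicit bound
  have hbnd : ∀ (ξ : ℝ), ξ ∈ Set.Ioi (0:ℝ) → ∀ n : ℕ,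
      ‖f n ξ‖ ≤ (A * Real.exp (-(r * ξ))) * ((c * ξ) ^ n / n.factorial) := by
    intro ξ hξ n
    rw [hfnorm n ξ hξ]
    have hrw : (A * Real.exp (-(r * ξ))) * ((c * ξ) ^ n / n.factorial)
        = ((A * c ^ n) / n.factorial) * (ξ ^ n * Real.exp (-(r * ξ))) := by
      rw [mul_pow]; ring
    rw [hrw]
    refine mul_le_mul_of_nonneg_right ?_
      (mul_nonneg (pow_nonneg (le_of_lt hξ) n) (Real.exp_pos _).le)
    gcongr
    exact hbd n
  have hsumnorms : ∀ (ξ : ℝ), ξ ∈ Set.Ioi (0:ℝ) → Summable (fun n : ℕ => ‖f n ξ‖) := by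
    intro ξ hξ
    apply Summable.of_nonneg_of_le (fun n => norm_nonneg _) (hbnd ξ hξ)
    exact (Real.summable_pow_div_factorial (c * ξ)).mul_left _
  -- measurability of the integrand
  have hmeas : AEStronglyMeasurable
      (fun ξ : ℝ => Complex.exp (-z * ((ξ : ℂ) * e)) *
        (∑' n : ℕ, a n * ((ξ : ℂ) * e) ^ n / (n.factorial : ℂ)) * e)
      (volume.restrict (Set.Ioi (0:ℝ))) := by
    apply aestronglyMeasurable_of_tendsto_ae (atTop : Filter ℕ)
      (f := fun N ξ => ∑ n ∈ Finset.range N, f n ξ)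
    · intro N
      exact Finset.aestronglyMeasurable_fun_sum _ fun n _ => (hf_int n).aestronglyMeasurable
    · rw [ae_restrict_iff' measurableSet_Ioi]
      filter_upwards with ξ hξ
      rw [← ptw ξ]
      exact ((hsumnorms ξ hξ).of_norm).hasSum.tendsto_sum_nat
  -- integrability
  have hbound_int : IntegrableOn (fun ξ : ℝ => A * Real.exp (-(r - c) * ξ)) (Set.Ioi (0:ℝ)) :=
    (exp_neg_integrableOn_Ioi 0 (by linarith)).const_mul A
  have hInt : IntegrableOn
      (fun ξ : ℝ => Complex.exp (-z * ((ξ : ℂ) * e)) *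
        (∑' n : ℕ, a n * ((ξ : ℂ) * e) ^ n / (n.factorial : ℂ)) * e)
      (Set.Ioi (0:ℝ)) := by
    refine hbound_int.mono' hmeas ?_
    rw [ae_restrict_iff' measurableSet_Ioi]
    filter_upwards with ξ hξ
    rw [← ptw ξ]
    calc ‖∑' n : ℕ, f n ξ‖ ≤ ∑' n : ℕ, ‖f n ξ‖ := norm_tsum_le_tsum_norm (hsumnorms ξ hξ)
      _ ≤ ∑' n : ℕ, (A * Real.exp (-(r * ξ))) * ((c * ξ) ^ n / n.factorial) :=
          Summable.tsum_le_tsum (hbnd ξ hξ) (hsumnorms ξ hξ)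
            ((Real.summable_pow_div_factorial (c * ξ)).mul_left _)
      _ = (A * Real.exp (-(r * ξ))) * ∑' n : ℕ, (c * ξ) ^ n / n.factorial := tsum_mul_left
      _ = A * Real.exp (-(r - c) * ξ) := by
          rw [aux_exp_tsum, mul_assoc, ← Real.exp_add]
          congr 2
          ring
  -- summability of the coefficient series
  have hcz : c < ‖z‖ := by
    refine lt_of_lt_of_le hr ?_
    calc r ≤ ‖w‖ := Complex.re_le_norm w
      _ = ‖z‖ := by rw [hwdef, norm_mul, he1, mul_one]
  have hz0' : (0:ℝ) < ‖z‖ := hc.trans hcz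
  have hgeo2 : Summable (fun n : ℕ => (A / ‖z‖) * (c / ‖z‖) ^ n) := by
    apply Summable.mul_left
    apply summable_geometric_of_lt_one (by positivity)
    rw [div_lt_one hz0']; exact hcz
  have hsumm2 : Summable (fun n : ℕ => a n / z ^ (n + 1)) := by
    apply Summable.of_norm
    apply hgeo2.of_nonneg_of_le (fun n => norm_nonneg _)
    intro n
    have hrw : (A / ‖z‖) * (c / ‖z‖) ^ n = (A * c ^ n) / ‖z‖ ^ (n+1) := by
      rw [div_pow, div_mul_div_comm, pow_succ']
    rw [hrw, norm_div, norm_pow]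
    gcongr
    exact hbd n
  -- conclusion
  have hHasSum := hasSum_integral_of_summable_integral_norm hf_int hsum_norm
  refine ⟨hInt, hsumm2, ?_⟩
  have heq1 : (∫ ξ in Set.Ioi (0:ℝ), ∑' n : ℕ, f n ξ) =
      ∫ ξ in Set.Ioi (0:ℝ),
        Complex.exp (-z * ((ξ : ℂ) * e)) *
          (∑' n : ℕ, a n * ((ξ : ℂ) * e) ^ n / (n.factorial : ℂ)) * e := by
    exact integral_congr_ae (Filter.Eventually.of_forall fun ξ => ptw ξ)
  rw [← heq1, ← hHasSum.tsum_eq]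
  exact tsum_congr hf_val
end

section
/- One has (x/(2π))^{1/2}·x^{−x}·e^x·Γ(x) → 1 as x → +∞, where Γ(x) = ∫₀^{+∞} t^{x−1} e^{−t} dt is Euler's Gamma function on (0,+∞) and x^{−x} = e^{−x·log x}. -/
open Filter Real Topology Set

noncomputable def aseq (n : ℕ) : ℝ :=
  Real.log (Stirling.stirlingSeq n) - Real.log (Real.sqrt Real.pi)

noncomputable def gfun (x : ℝ) : ℝ :=
  Real.log (Real.Gamma x) - (x - 1/2) * Real.log x + x - Real.log (2*Real.pi)/2

lemma aseq_tendsto : Tendsto aseq atTop (nhds 0) := by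
  have h := (Stirling.tendsto_stirlingSeq_sqrt_pi).log (by positivity)
  have := h.sub_const (Real.log (Real.sqrt Real.pi))
  rw [sub_self] at this; exact this

lemma log_factorial (n : ℕ) (hn : 1 ≤ n) :
    Real.log n.factorial =
      ((n : ℝ) + 1/2) * Real.log n - n + Real.log (2 * Real.pi) / 2 + aseq n := by
  have hn0 : (0:ℝ) < n := by exact_mod_cast hn
  have hfac : (0:ℝ) < n.factorial := by exact_mod_cast n.factorial_pos
  have hs : (0:ℝ) < Real.sqrt (2 * n) * ((n : ℝ) / Real.exp 1) ^ n := by positivity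
  have h1 : Real.log (Stirling.stirlingSeq n)
      = Real.log n.factorial - ((Real.log 2 + Real.log n) / 2 + n * (Real.log n - 1)) := by
    rw [Stirling.stirlingSeq, Real.log_div (by positivity) hs.ne',
      Real.log_mul (Real.sqrt_pos.mpr (by positivity)).ne' (by positivity),
      Real.log_sqrt (by positivity), Real.log_pow,
      Real.log_mul (by norm_num) hn0.ne', Real.log_div hn0.ne' (Real.exp_pos 1).ne',
      Real.log_exp]
  have h2 : Real.log (Real.sqrt Real.pi) = Real.log Real.pi / 2 := Real.log_sqrt Real.pi_pos.le
  have h3 : Real.log (2 * Real.pi) = Real.log 2 + Real.log Real.pi :=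
    Real.log_mul (by norm_num) Real.pi_pos.ne'
  rw [aseq, h1, h2, h3]; ring

lemma logGamma_succ (n : ℕ) (hn : 1 ≤ n) :
    Real.log (Real.Gamma ((n:ℝ) + 1)) = Real.log n + Real.log (Real.Gamma n) := by
  have hn0 : (0:ℝ) < n := by exact_mod_cast hn
  rw [Real.Gamma_add_one hn0.ne', Real.log_mul hn0.ne' (Real.Gamma_pos_of_pos hn0).ne']

lemma logGamma_upper (n : ℕ) (hn : 1 ≤ n) (x : ℝ) (hx1 : (n:ℝ) ≤ x) (hx2 : x ≤ (n:ℝ)+1) :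
    Real.log (Real.Gamma x) ≤ Real.log (Real.Gamma n) + (x - n) * Real.log n := by
  have hn0 : (0:ℝ) < n := by exact_mod_cast hn
  set t : ℝ := x - n with ht
  have h := Real.convexOn_log_Gamma.2 (Set.mem_Ioi.mpr hn0)
    (Set.mem_Ioi.mpr (by linarith : (0:ℝ) < (n:ℝ)+1))
    (by linarith : (0:ℝ) ≤ 1 - t) (by linarith : (0:ℝ) ≤ t) (by ring)
  have hpt : (1 - t) • (n:ℝ) + t • ((n:ℝ)+1) = x := by simp [smul_eq_mul]; ring
  rw [hpt] at h
  simp only [smul_eq_mul, Function.comp_apply] at h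
  have := logGamma_succ n hn
  nlinarith [h, this]

lemma logGamma_lower (n : ℕ) (hn : 2 ≤ n) (x : ℝ) (hx1 : (n:ℝ) ≤ x) :
    Real.log (Real.Gamma n) + (x - n) * Real.log ((n:ℝ) - 1) ≤ Real.log (Real.Gamma x) := by
  have hn0 : (0:ℝ) < n := by positivity
  have hn1 : (1:ℝ) < n := by exact_mod_cast hn
  rcases eq_or_lt_of_le hx1 with rfl | hlt
  · simp
  · have hs := Real.convexOn_log_Gamma.slope_mono_adjacent
      (Set.mem_Ioi.mpr (by linarith : (0:ℝ) < (n:ℝ) - 1))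
      (Set.mem_Ioi.mpr (lt_trans hn0 hlt))
      (by linarith : (n:ℝ) - 1 < (n:ℝ)) hlt
    simp only [Function.comp_apply] at hs
    have hΓ : Real.Gamma (n:ℝ) = ((n:ℝ) - 1) * Real.Gamma ((n:ℝ) - 1) := by
      have : Real.Gamma (((n:ℝ) - 1) + 1) = ((n:ℝ)-1) * Real.Gamma ((n:ℝ)-1) :=
        Real.Gamma_add_one (by linarith)
      simpa using this
    have hdiff : Real.log (Real.Gamma (n:ℝ)) - Real.log (Real.Gamma ((n:ℝ) - 1))
        = Real.log ((n:ℝ) - 1) := by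
      rw [hΓ, Real.log_mul (by linarith) (Real.Gamma_pos_of_pos (by linarith)).ne']
      ring
    rw [div_le_div_iff₀ (by linarith) (by linarith)] at hs
    nlinarith [hs, hdiff]

set_option maxHeartbeats 2000000 in
lemma gfun_bounds (x : ℝ) (hx : 4 ≤ x) :
    aseq ⌊x⌋₊ - 4/x ≤ gfun x ∧ gfun x ≤ aseq ⌊x⌋₊ + 1/x := by
  set n := ⌊x⌋₊ with hn
  have hx0 : (0:ℝ) < x := by linarith
  have hn4 : 4 ≤ n := Nat.le_floor (by exact_mod_cast hx)
  have hn4' : (4:ℝ) ≤ n := by exact_mod_cast hn4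
  have hnx : (n:ℝ) ≤ x := Nat.floor_le hx0.le
  have hxn : x < (n:ℝ) + 1 := Nat.lt_floor_add_one x
  have hn0 : (0:ℝ) < n := by linarith
  have hfact : (n:ℝ) * ((n-1).factorial : ℝ) = (n.factorial : ℝ) := by
    exact_mod_cast congrArg (Nat.cast : ℕ → ℝ) (Nat.mul_factorial_pred (by omega))
  have hΓn : Real.Gamma (n:ℝ) = ((n-1).factorial : ℝ) := by
    have h := Real.Gamma_nat_eq_factorial (n-1)
    rw [show (((n-1:ℕ)):ℝ) + 1 = (n:ℝ) by push_cast [Nat.cast_sub (by omega : 1 ≤ n)]; ring] at h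
    exact h
  have hlogΓn : Real.log (Real.Gamma (n:ℝ)) =
      ((n:ℝ) + 1/2) * Real.log n - n + Real.log (2*Real.pi)/2 + aseq n - Real.log n := by
    rw [hΓn]
    have h1 : Real.log (n.factorial : ℝ) = Real.log n + Real.log ((n-1).factorial : ℝ) := by
      rw [← hfact, Real.log_mul hn0.ne' (by positivity)]
    have h2 := log_factorial n (by omega)
    linarith
  set L1 : ℝ := Real.log x - Real.log n with hL1
  set L2 : ℝ := Real.log x - Real.log ((n:ℝ)-1) with hL2
  have hL1nn : 0 ≤ L1 := by
    have := Real.log_le_log hn0 hnx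
    linarith
  have hL2nn : 0 ≤ L2 := by
    have := Real.log_le_log (show (0:ℝ) < (n:ℝ)-1 by linarith) (show (n:ℝ)-1 ≤ x by linarith)
    linarith
  have hA : x - n ≤ x * L1 := by
    have h := Real.log_le_sub_one_of_pos (show (0:ℝ) < (n:ℝ)/x by positivity)
    rw [Real.log_div hn0.ne' hx0.ne'] at h
    have h' := mul_le_mul_of_nonneg_left h hx0.le
    have hc : x * ((n:ℝ)/x) = n := mul_div_cancel₀ _ hx0.ne'
    have h'' : x * (Real.log n - Real.log x) ≤ x * ((n:ℝ)/x) - x := by linarith [h']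
    simp only [hL1]
    nlinarith [h'', hc]
  have hB : (n:ℝ) * L1 ≤ x - n := by
    have h := Real.log_le_sub_one_of_pos (show (0:ℝ) < x/(n:ℝ) by positivity)
    rw [Real.log_div hx0.ne' hn0.ne'] at h
    have h' := mul_le_mul_of_nonneg_left h hn0.le
    have hc : (n:ℝ) * (x/(n:ℝ)) = x := mul_div_cancel₀ _ hn0.ne'
    have h'' : (n:ℝ) * (Real.log x - Real.log n) ≤ (n:ℝ) * (x/(n:ℝ)) - n := by linarith [h']
    simp only [hL1]
    nlinarith [h'', hc]
  have hC : ((n:ℝ)-1) * L2 ≤ x - n + 1 := by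
    have hm : (0:ℝ) < (n:ℝ) - 1 := by linarith
    have h := Real.log_le_sub_one_of_pos (div_pos hx0 hm)
    rw [Real.log_div hx0.ne' hm.ne'] at h
    have h' := mul_le_mul_of_nonneg_left h hm.le
    have hc : ((n:ℝ)-1) * (x/((n:ℝ)-1)) = x := mul_div_cancel₀ _ hm.ne'
    have h'' : ((n:ℝ)-1) * (Real.log x - Real.log ((n:ℝ)-1))
        ≤ ((n:ℝ)-1) * (x/((n:ℝ)-1)) - ((n:ℝ)-1) := by
      linarith [h']
    simp only [hL2]
    nlinarith [h'', hc]
  constructor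
  · have hlow := logGamma_lower n (by omega) x hnx
    have key1 : 0 ≤ (x - n) - ((n:ℝ) - 1/2) * L1 := by nlinarith [hB, hL1nn]
    have key2 : (x - n) * L2 ≤ 4 / x := by
      rw [le_div_iff₀ hx0]
      have p1 : 0 ≤ (1 - (x - n)) * (L2 * x) :=
        mul_nonneg (by linarith) (mul_nonneg hL2nn hx0.le)
      have p2 := mul_le_mul_of_nonneg_right hC hx0.le
      have p3 : 0 ≤ (2 - (x - n + 1)) * x := mul_nonneg (by linarith) hx0.le
      have hxL2 : x * L2 ≤ 4 := by
        have h4 : ((n:ℝ)-1) * (x * L2) ≤ ((n:ℝ)-1) * 4 := by nlinarith [p2, p3]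
        exact (mul_le_mul_iff_right₀ (by linarith : (0:ℝ) < (n:ℝ)-1)).mp h4
      nlinarith [p1, hxL2]
    have expand : gfun x - aseq n =
        (Real.log (Real.Gamma x) - (Real.log (Real.Gamma (n:ℝ)) + (x - n) * Real.log ((n:ℝ)-1)))
          + ((x - n) - ((n:ℝ) - 1/2) * L1 - (x - n) * L2) := by
      simp only [gfun, hL1, hL2]
      linear_combination hlogΓn
    linarith [hlow, key1, key2, expand]
  · have hup := logGamma_upper n (by omega) x hnx hxn.le
    have key : (x - n) - (x - 1/2) * L1 ≤ 1 / x := by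
      rw [le_div_iff₀ hx0]
      have q : 0 ≤ (x - 1/2) * (x * L1 - (x - n)) :=
        mul_nonneg (by linarith) (by linarith [hA])
      nlinarith [q]
    have expand : gfun x - aseq n =
        (Real.log (Real.Gamma x) - (Real.log (Real.Gamma (n:ℝ)) + (x - n) * Real.log n))
          + ((x - n) - (x - 1/2) * L1) := by
      simp only [gfun, hL1]
      linear_combination hlogΓn
    linarith [hup, key, expand]

lemma gfun_tendsto : Tendsto gfun atTop (nhds 0) := by
  have hfloor : Tendsto (fun x : ℝ => aseq ⌊x⌋₊) atTop (nhds 0) :=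
    aseq_tendsto.comp tendsto_nat_floor_atTop
  have hinv : ∀ c : ℝ, Tendsto (fun x : ℝ => c / x) atTop (nhds 0) := fun c =>
    tendsto_const_nhds.div_atTop tendsto_id
  refine tendsto_of_tendsto_of_tendsto_of_le_of_le'
    (g := fun x : ℝ => aseq ⌊x⌋₊ - 4/x) (h := fun x : ℝ => aseq ⌊x⌋₊ + 1/x)
    ?_ ?_ ?_ ?_
  · simpa using hfloor.sub (hinv 4)
  · simpa using hfloor.add (hinv 1)
  · filter_upwards [eventually_ge_atTop (4:ℝ)] with x hx using (gfun_bounds x hx).1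
  · filter_upwards [eventually_ge_atTop (4:ℝ)] with x hx using (gfun_bounds x hx).2

/-- Stirling's formula for the real Gamma function:
`(x/(2π))^{1/2} · x^{-x} · e^x · Γ(x) → 1` as `x → +∞`, with `x^{-x} = e^{-x log x}`. -/
theorem stmt_6 :
    Filter.Tendsto
      (fun x : ℝ => Real.sqrt (x / (2 * Real.pi)) * Real.exp (-x * Real.log x) *
        Real.exp x * Real.Gamma x)
      Filter.atTop (nhds 1) := by
  have h := (Real.continuous_exp.tendsto 0).comp gfun_tendsto
  rw [Real.exp_zero] at h
  refine h.congr' ?_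
  filter_upwards [eventually_gt_atTop (0:ℝ)] with x hx
  have hΓ : (0:ℝ) < Real.Gamma x := Real.Gamma_pos_of_pos hx
  have hq : (0:ℝ) < x / (2 * Real.pi) := by positivity
  have hsqrt : Real.sqrt (x / (2 * Real.pi)) = Real.exp (Real.log (x / (2 * Real.pi)) / 2) := by
    rw [← Real.log_sqrt hq.le, Real.exp_log (Real.sqrt_pos.mpr hq)]
  have hΓe : Real.Gamma x = Real.exp (Real.log (Real.Gamma x)) := (Real.exp_log hΓ).symm
  show Real.exp (gfun x) = _
  rw [hsqrt, hΓe, ← Real.exp_add, ← Real.exp_add, ← Real.exp_add]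
  congr 1
  rw [gfun, Real.log_div hx.ne' (by positivity)]
  ring
end

section
/- Let w ∈ ℂ with 0 < |w| < 1 and define φ^P(z) := Σ_{k≥0} w^k/(z+k), which converges for every z ∈ ℂ∖{0,−1,−2,…}. Then φ^P(z) − w·φ^P(z+1) = 1/z for all z ∈ ℂ∖{0,−1,−2,…}. Moreover, for every z₀ ∈ ℂ∖(−∞,0] and every bounded function ψ defined on the half-line z₀ + ℝ≥0 satisfying ψ(z) − w·ψ(z+1) = 1/z for all z ∈ z₀ + ℝ≥0, one has ψ(z) = φ^P(z) for all z ∈ z₀ + ℝ≥0. -/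
open Filter

lemma aux_summable (w : ℂ) (hw1 : ‖w‖ < 1) (z : ℂ) :
    Summable (fun k : ℕ => w ^ k / (z + (k : ℂ))) := by
  apply Summable.of_norm_bounded_eventually_nat (g := fun k => ‖w‖ ^ k)
    (summable_geometric_of_lt_one (norm_nonneg w) hw1)
  filter_upwards [eventually_ge_atTop (⌈‖z‖⌉₊ + 1)] with k hk
  have hk' : ‖z‖ + 1 ≤ (k : ℝ) := by
    have h1 := Nat.le_ceil ‖z‖
    have h2 : ((⌈‖z‖⌉₊ + 1 : ℕ) : ℝ) ≤ (k : ℝ) := Nat.cast_le.2 hk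
    push_cast at h2
    linarith
  have hge : (1 : ℝ) ≤ ‖z + (k : ℂ)‖ := by
    have : ‖(k : ℂ)‖ ≤ ‖z + (k : ℂ)‖ + ‖z‖ := by
      calc ‖(k : ℂ)‖ = ‖(z + (k : ℂ)) + (-z)‖ := by ring_nf
        _ ≤ ‖z + (k : ℂ)‖ + ‖(-z)‖ := norm_add_le _ _
        _ = ‖z + (k : ℂ)‖ + ‖z‖ := by rw [norm_neg]
    have hknorm : ‖(k : ℂ)‖ = (k : ℝ) := by
      simp [Complex.norm_natCast]
    linarith
  rw [norm_div, norm_pow]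
  exact div_le_self (by positivity) hge

lemma aux_bound (w : ℂ) (hw1 : ‖w‖ < 1) (c : ℝ) (hc : 0 < c) (z : ℂ)
    (hz : ∀ k : ℕ, c ≤ ‖z + (k : ℂ)‖) :
    ‖∑' k : ℕ, w ^ k / (z + (k : ℂ))‖ ≤ (1 - ‖w‖)⁻¹ / c := by
  have hsum : Summable (fun k : ℕ => ‖w‖ ^ k / c) :=
    (summable_geometric_of_lt_one (norm_nonneg w) hw1).div_const c
  have hnorm : Summable (fun k : ℕ => ‖w ^ k / (z + (k : ℂ))‖) := by
    apply Summable.of_nonneg_of_le (fun k => norm_nonneg _) _ hsum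
    intro k
    rw [norm_div, norm_pow]
    exact div_le_div_of_nonneg_left (by positivity) hc (hz k)
  calc ‖∑' k : ℕ, w ^ k / (z + (k : ℂ))‖ ≤ ∑' k : ℕ, ‖w ^ k / (z + (k : ℂ))‖ :=
        norm_tsum_le_tsum_norm hnorm
    _ ≤ ∑' k : ℕ, ‖w‖ ^ k / c := by
        apply Summable.tsum_le_tsum _ hnorm hsum
        intro k
        rw [norm_div, norm_pow]
        exact div_le_div_of_nonneg_left (by positivity) hc (hz k)
    _ = (∑' k : ℕ, ‖w‖ ^ k) / c := by rw [tsum_div_const]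
    _ = (1 - ‖w‖)⁻¹ / c := by rw [tsum_geometric_of_lt_one (norm_nonneg w) hw1]

lemma aux_eq (w : ℂ) (hw1 : ‖w‖ < 1) (z : ℂ) (hz0 : z ≠ 0) :
    (∑' k : ℕ, w ^ k / (z + (k : ℂ))) -
        w * (∑' k : ℕ, w ^ k / (z + 1 + (k : ℂ))) = 1 / z := by
  have hs := aux_summable w hw1 z
  have h1 : w * (∑' k : ℕ, w ^ k / (z + 1 + (k : ℂ))) =
      ∑' k : ℕ, w ^ (k + 1) / (z + ((k + 1 : ℕ) : ℂ)) := by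
    rw [← tsum_mul_left]
    congr 1; ext k
    rw [pow_succ]; push_cast; ring
  rw [h1, Summable.tsum_eq_zero_add hs]
  simp

/-- Poincaré's example: `φ^P(z) = Σ_k wᵏ/(z+k)` converges on `ℂ∖{0,-1,-2,…}`, satisfies
the difference equation `φ(z) − wφ(z+1) = 1/z` there, and its restriction to any
half-line `z₀ + ℝ≥0` with `z₀ ∉ (−∞,0]` is the unique bounded solution of that
difference equation on the half-line. -/
theorem stmt_10 (w : ℂ) (hw0 : w ≠ 0) (hw1 : ‖w‖ < 1) :
    (∀ z : ℂ, (∀ k : ℕ, z + (k : ℂ) ≠ 0) →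
      Summable (fun k : ℕ => w ^ k / (z + (k : ℂ)))) ∧
      (∀ z : ℂ, (∀ k : ℕ, z + (k : ℂ) ≠ 0) →
        (∑' k : ℕ, w ^ k / (z + (k : ℂ))) -
            w * (∑' k : ℕ, w ^ k / (z + 1 + (k : ℂ))) = 1 / z) ∧
      ∀ z₀ : ℂ, ¬(z₀.im = 0 ∧ z₀.re ≤ 0) →
        ∀ ψ : ℂ → ℂ,
          (∃ C : ℝ, ∀ t : ℝ, 0 ≤ t → ‖ψ (z₀ + (t : ℂ))‖ ≤ C) →
          (∀ t : ℝ, 0 ≤ t →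
            ψ (z₀ + (t : ℂ)) - w * ψ (z₀ + (t : ℂ) + 1) = 1 / (z₀ + (t : ℂ))) →
          ∀ t : ℝ, 0 ≤ t →
            ψ (z₀ + (t : ℂ)) = ∑' k : ℕ, w ^ k / (z₀ + (t : ℂ) + (k : ℂ)) := by
  refine ⟨fun z _ => aux_summable w hw1 z, fun z hz => aux_eq w hw1 z (by simpa using hz 0), ?_⟩
  intro z₀ hz₀ ψ ⟨C, hC⟩ hψ t ht
  -- uniform lower bound on denominators
  obtain ⟨c, hc, hlow⟩ : ∃ c : ℝ, 0 < c ∧ ∀ s : ℝ, 0 ≤ s → ∀ k : ℕ,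
      c ≤ ‖z₀ + (s : ℂ) + (k : ℂ)‖ := by
    by_cases him : z₀.im = 0
    · have hre : 0 < z₀.re := by
        by_contra h
        exact hz₀ ⟨him, le_of_not_gt h⟩
      refine ⟨z₀.re, hre, fun s hs k => ?_⟩
      have : (z₀ + (s : ℂ) + (k : ℂ)).re = z₀.re + s + k := by simp
      calc z₀.re ≤ z₀.re + s + k := by have : (0:ℝ) ≤ (k:ℝ) := Nat.cast_nonneg k; linarith
        _ ≤ |(z₀ + (s : ℂ) + (k : ℂ)).re| := by rw [this]; exact le_abs_self _
        _ ≤ ‖z₀ + (s : ℂ) + (k : ℂ)‖ := Complex.abs_re_le_norm _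
    · refine ⟨|z₀.im|, abs_pos.2 him, fun s hs k => ?_⟩
      have : (z₀ + (s : ℂ) + (k : ℂ)).im = z₀.im := by simp
      calc |z₀.im| = |(z₀ + (s : ℂ) + (k : ℂ)).im| := by rw [this]
        _ ≤ ‖z₀ + (s : ℂ) + (k : ℂ)‖ := Complex.abs_im_le_norm _
  set φ : ℝ → ℂ := fun s => ∑' k : ℕ, w ^ k / (z₀ + (s : ℂ) + (k : ℂ)) with hφ
  set δ : ℝ → ℂ := fun s => ψ (z₀ + (s : ℂ)) - φ s with hδ
  -- φ satisfies the same difference equation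
  have hφeq : ∀ s : ℝ, 0 ≤ s → φ s - w * φ (s + 1) = 1 / (z₀ + (s : ℂ)) := by
    intro s hs
    have h0 : z₀ + (s : ℂ) ≠ 0 := by
      intro h
      have := hlow s hs 0
      rw [show (z₀ + (s : ℂ) + ((0 : ℕ) : ℂ)) = z₀ + (s : ℂ) by push_cast; ring, h] at this
      simp at this; linarith
    have := aux_eq w hw1 (z₀ + (s : ℂ)) h0
    have heq : φ (s + 1) = ∑' k : ℕ, w ^ k / (z₀ + (s : ℂ) + 1 + (k : ℂ)) := by
      simp only [hφ]; congr 1; ext k; push_cast; ring_nf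
    rw [heq]; exact this
  -- δ(s) = w^n δ(s+n)
  have hstep : ∀ s : ℝ, 0 ≤ s → δ s = w * δ (s + 1) := by
    intro s hs
    have h1 := hψ s hs
    have h2 := hφeq s hs
    have : ψ (z₀ + (s : ℂ) + 1) = ψ (z₀ + ((s + 1 : ℝ) : ℂ)) := by push_cast; ring_nf
    rw [this] at h1
    simp only [hδ]
    have := sub_eq_zero.2 (h1.trans h2.symm)
    ring_nf at this ⊢
    linear_combination this
  have hiter : ∀ n : ℕ, δ t = w ^ n * δ (t + n) := by
    intro n
    induction n with
    | zero => simp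
    | succ n ih =>
      rw [ih, hstep (t + n) (by positivity)]
      push_cast
      ring_nf
  -- δ is bounded
  have hφbd : ∀ s : ℝ, 0 ≤ s → ‖φ s‖ ≤ (1 - ‖w‖)⁻¹ / c :=
    fun s hs => aux_bound w hw1 c hc _ (hlow s hs)
  set D : ℝ := C + (1 - ‖w‖)⁻¹ / c with hD
  have hδbd : ∀ s : ℝ, 0 ≤ s → ‖δ s‖ ≤ D := by
    intro s hs
    calc ‖δ s‖ ≤ ‖ψ (z₀ + (s : ℂ))‖ + ‖φ s‖ := norm_sub_le _ _
      _ ≤ D := add_le_add (hC s hs) (hφbd s hs)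
  -- conclude
  have hlim : Tendsto (fun n : ℕ => ‖w‖ ^ n * D) atTop (nhds 0) := by
    have := tendsto_pow_atTop_nhds_zero_of_lt_one (norm_nonneg w) hw1
    simpa using this.mul_const D
  have hle : ‖δ t‖ ≤ 0 := by
    apply ge_of_tendsto' hlim
    intro n
    calc ‖δ t‖ = ‖w ^ n * δ (t + n)‖ := by rw [← hiter n]
      _ = ‖w‖ ^ n * ‖δ (t + n)‖ := by rw [norm_mul, norm_pow]
      _ ≤ ‖w‖ ^ n * D := by
          apply mul_le_mul_of_nonneg_left (hδbd _ (by positivity)) (by positivity)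
  have : δ t = 0 := norm_le_zero_iff.1 hle
  simpa [hδ, sub_eq_zero, hφ] using this
end

section
/- Let s ∈ ℂ with Re s < 0 and w := e^s. For every θ ∈ (−π/2, π/2) and every z ∈ ℂ with Re(z·e^{iθ}) > 0, the integral e^{iθ}∫₀^{+∞} e^{−z·ξe^{iθ}}·(1 − w·e^{−ξe^{iθ}})^{−1} dξ converges and equals Σ_{k≥0} w^k/(z+k). -/
open MeasureTheory Set Filter

lemma cexp_laplace (a : ℂ) (ha : 0 < a.re) :
    IntegrableOn (fun x : ℝ => Complex.exp (-a * x)) (Set.Ioi 0) ∧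
      ∫ x in Set.Ioi (0:ℝ), Complex.exp (-a * x) = 1 / a := by
  have ha0 : a ≠ 0 := fun h => by simp [h] at ha
  have hnorm : ∀ x : ℝ, ‖Complex.exp (-a * x)‖ = Real.exp (-a.re * x) := by
    intro x
    rw [Complex.norm_exp]
    congr 1
    simp [Complex.mul_re]
  have hint : IntegrableOn (fun x : ℝ => Complex.exp (-a * x)) (Set.Ioi 0) := by
    refine (exp_neg_integrableOn_Ioi 0 ha).mono' ?_ ?_
    · exact (Complex.continuous_exp.comp (by continuity)).aestronglyMeasurable
    · filter_upwards with x using (hnorm x).le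
  refine ⟨hint, ?_⟩
  have hderiv : ∀ x ∈ Set.Ioi (0:ℝ),
      HasDerivAt (fun x : ℝ => -Complex.exp (-a * x) / a) (Complex.exp (-a * x)) x := by
    intro x _
    have h1 : HasDerivAt (fun w : ℂ => -Complex.exp (-a * w) / a)
        (Complex.exp (-a * (x:ℂ))) (x:ℂ) := by
      have h2 : HasDerivAt (fun w : ℂ => -a * w) (-a) (x:ℂ) := by
        simpa using (hasDerivAt_id (x:ℂ)).const_mul (-a)
      have h3 := (Complex.hasDerivAt_exp (-a * (x:ℂ))).comp (x:ℂ) h2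
      have h4 := (h3.neg).div_const a
      exact h4.congr_deriv (by simp [ha0])
    exact h1.comp_ofReal
  have htend : Tendsto (fun x : ℝ => -Complex.exp (-a * x) / a) atTop (nhds 0) := by
    rw [tendsto_zero_iff_norm_tendsto_zero]
    have : (fun x : ℝ => ‖-Complex.exp (-a * x) / a‖) =
        fun x : ℝ => Real.exp (-(a.re * x)) / ‖a‖ := by
      funext x; rw [norm_div, norm_neg, hnorm]; ring_nf
    rw [this]
    have h5 : Tendsto (fun x : ℝ => a.re * x) atTop atTop :=
      Tendsto.const_mul_atTop ha tendsto_id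
    simpa using (Real.tendsto_exp_neg_atTop_nhds_zero.comp h5).div_const ‖a‖
  have := integral_Ioi_of_hasDerivAt_of_tendsto
    (f := fun x : ℝ => -Complex.exp (-a * x) / a) ?_ hderiv hint htend
  · rw [this]; simp; field_simp
  · exact ((Complex.continuous_exp.comp (by continuity)).neg.div_const a).continuousWithinAt

set_option maxHeartbeats 1000000 in
/-- Borel–Laplace summation for Poincaré's example: for `Re s < 0`, `w = e^s`,
`θ ∈ (−π/2, π/2)` and `Re(z e^{iθ}) > 0`, the Laplace integral of the Borel transform
`(1 − w e^{−ζ})^{-1}` in the direction `θ` converges and equals `Σ_k wᵏ/(z+k)`. -/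
theorem stmt_11 (s : ℂ) (hs : s.re < 0) (θ : ℝ)
    (hθ : θ ∈ Set.Ioo (-(Real.pi / 2)) (Real.pi / 2)) (z : ℂ)
    (hz : 0 < (z * Complex.exp ((θ : ℂ) * Complex.I)).re) :
    IntegrableOn
        (fun ξ : ℝ => Complex.exp (-z * ((ξ : ℂ) * Complex.exp ((θ : ℂ) * Complex.I))) *
          (1 - Complex.exp s *
            Complex.exp (-((ξ : ℂ) * Complex.exp ((θ : ℂ) * Complex.I))))⁻¹)
        (Set.Ioi (0:ℝ)) ∧
      Complex.exp ((θ : ℂ) * Complex.I) *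
          (∫ ξ in Set.Ioi (0:ℝ),
            Complex.exp (-z * ((ξ : ℂ) * Complex.exp ((θ : ℂ) * Complex.I))) *
              (1 - Complex.exp s *
                Complex.exp (-((ξ : ℂ) * Complex.exp ((θ : ℂ) * Complex.I))))⁻¹) =
        ∑' k : ℕ, Complex.exp s ^ k / (z + (k : ℂ)) := by
  set c : ℂ := Complex.exp ((θ : ℂ) * Complex.I) with hc
  set w : ℂ := Complex.exp s with hw
  set r : ℝ := Real.exp s.re with hrdef
  have hr1 : r < 1 := by
    rw [hrdef, ← Real.exp_zero]
    exact Real.exp_lt_exp.2 hs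
  have hr0 : 0 < r := Real.exp_pos _
  have hwnorm : ‖w‖ = r := by
    rw [hw, Complex.norm_exp]
  have hcos : 0 < Real.cos θ := Real.cos_pos_of_mem_Ioo hθ
  have hcre : c.re = Real.cos θ := by
    rw [hc, Complex.exp_re]
    simp
  have hc0 : c ≠ 0 := Complex.exp_ne_zero _
  -- positivity of exponents
  have ha : ∀ k : ℕ, 0 < ((z + (k : ℂ)) * c).re := by
    intro k
    have : ((z + (k : ℂ)) * c).re = (z * c).re + k * c.re := by
      rw [add_mul]
      simp [Complex.add_re, Complex.mul_re]
    rw [this, hcre]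
    positivity
  have hzk : ∀ k : ℕ, z + (k : ℂ) ≠ 0 := by
    intro k h
    have := ha k
    rw [h] at this
    simp at this
  -- norm of exp(-(ξ c))
  have hexpnorm : ∀ ξ : ℝ, ‖Complex.exp (-((ξ:ℂ) * c))‖ = Real.exp (-(ξ * c.re)) := by
    intro ξ
    rw [Complex.norm_exp]
    congr 1
    simp [Complex.mul_re]
  have hxlt : ∀ ξ : ℝ, 0 ≤ ξ → ‖w * Complex.exp (-((ξ:ℂ) * c))‖ < 1 := by
    intro ξ hξ
    rw [norm_mul, hwnorm, hexpnorm]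
    calc r * Real.exp (-(ξ * c.re)) ≤ r * 1 := by
          apply mul_le_mul_of_nonneg_left _ hr0.le
          rw [← Real.exp_zero]
          apply Real.exp_le_exp.2
          rw [hcre]; nlinarith
      _ = r := mul_one r
      _ < 1 := hr1
  have hne : ∀ ξ : ℝ, 0 ≤ ξ → 1 - w * Complex.exp (-((ξ:ℂ) * c)) ≠ 0 := by
    intro ξ hξ h
    have h1 : w * Complex.exp (-((ξ:ℂ) * c)) = 1 := by
      have := sub_eq_zero.1 h
      exact this.symm
    have := hxlt ξ hξ
    rw [h1] at this
    simp at this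
  -- the series terms
  set F : ℕ → ℝ → ℂ := fun k ξ => w ^ k * Complex.exp (-((z + (k:ℂ)) * c) * ξ) with hF
  have hFint : ∀ k, IntegrableOn (F k) (Set.Ioi 0) :=
    fun k => ((cexp_laplace _ (ha k)).1.const_mul _)
  have hFval : ∀ k, ∫ ξ in Set.Ioi (0:ℝ), F k ξ = w ^ k / ((z + (k:ℂ)) * c) := by
    intro k
    rw [hF]
    simp only []
    rw [MeasureTheory.integral_const_mul, (cexp_laplace _ (ha k)).2]
    rw [mul_one_div]
  -- norms of F k
  have hFnorm : ∀ k (ξ : ℝ), ‖F k ξ‖ =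
      r ^ k * Real.exp (-((z + (k:ℂ)) * c).re * ξ) := by
    intro k ξ
    rw [hF]
    simp only []
    rw [norm_mul, norm_pow, hwnorm, Complex.norm_exp]
    congr 2
    rw [mul_comm, Complex.re_ofReal_mul, Complex.neg_re]
    ring
  -- pointwise identity on Ioi 0
  have hpt : ∀ ξ : ℝ, 0 ≤ ξ →
      Complex.exp (-z * ((ξ : ℂ) * c)) * (1 - w * Complex.exp (-((ξ:ℂ) * c)))⁻¹ =
        ∑' k : ℕ, F k ξ := by
    intro ξ hξ
    rw [← tsum_geometric_of_norm_lt_one (hxlt ξ hξ), ← tsum_mul_left]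
    apply tsum_congr
    intro k
    rw [hF]
    simp only []
    have hkey : Complex.exp (-((ξ:ℂ) * c)) ^ k * Complex.exp (-z * ((ξ:ℂ) * c)) =
        Complex.exp (-((z + (k:ℂ)) * c) * ξ) := by
      rw [← Complex.exp_nat_mul, ← Complex.exp_add]
      congr 1
      push_cast
      ring
    rw [mul_pow, mul_comm (Complex.exp (-z * ((ξ:ℂ) * c))), mul_assoc, hkey]
  -- integrability of the original function
  have hmeas : AEStronglyMeasurable
      (fun ξ : ℝ => Complex.exp (-z * ((ξ : ℂ) * c)) *
        (1 - w * Complex.exp (-((ξ:ℂ) * c)))⁻¹) (volume.restrict (Set.Ioi 0)) := by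
    apply ContinuousOn.aestronglyMeasurable _ measurableSet_Ioi
    apply ContinuousOn.mul
    · exact (Complex.continuous_exp.comp (by continuity)).continuousOn
    · apply ContinuousOn.inv₀
      · exact (continuous_const.sub (continuous_const.mul
          (Complex.continuous_exp.comp (by continuity)))).continuousOn
      · intro ξ hξ
        exact hne ξ (le_of_lt hξ)
  have hbound : IntegrableOn
      (fun ξ : ℝ => Complex.exp (-z * ((ξ : ℂ) * c)) *
        (1 - w * Complex.exp (-((ξ:ℂ) * c)))⁻¹) (Set.Ioi 0) := by
    refine (((exp_neg_integrableOn_Ioi 0 hz).const_mul ((1 - r)⁻¹)).mono' hmeas ?_)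
    filter_upwards [ae_restrict_mem measurableSet_Ioi] with ξ hξ
    have hξ0 : (0:ℝ) ≤ ξ := le_of_lt hξ
    rw [norm_mul]
    have h1 : ‖Complex.exp (-z * ((ξ:ℂ) * c))‖ = Real.exp (-(z*c).re * ξ) := by
      rw [Complex.norm_exp]
      congr 1
      simp [Complex.mul_re]
      ring
    have h2 : ‖(1 - w * Complex.exp (-((ξ:ℂ) * c)))⁻¹‖ ≤ (1 - r)⁻¹ := by
      rw [norm_inv]
      apply inv_anti₀ (by linarith)
      calc 1 - r ≤ 1 - ‖w * Complex.exp (-((ξ:ℂ) * c))‖ := by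
            have : ‖w * Complex.exp (-((ξ:ℂ) * c))‖ ≤ r := by
              rw [norm_mul, hwnorm, hexpnorm]
              nlinarith [Real.exp_le_one_iff.2 (by nlinarith [hcre ▸ hcos] : -(ξ * c.re) ≤ 0), Real.exp_pos (-(ξ * c.re))]
            linarith
        _ ≤ ‖1 - w * Complex.exp (-((ξ:ℂ) * c))‖ := by
            calc 1 - ‖w * Complex.exp (-((ξ:ℂ) * c))‖
                = ‖(1:ℂ)‖ - ‖w * Complex.exp (-((ξ:ℂ) * c))‖ := by rw [norm_one]
              _ ≤ _ := norm_sub_norm_le _ _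
    calc ‖Complex.exp (-z * ((ξ:ℂ) * c))‖ * ‖(1 - w * Complex.exp (-((ξ:ℂ) * c)))⁻¹‖
        ≤ Real.exp (-(z*c).re * ξ) * (1 - r)⁻¹ := by
          rw [h1]
          exact mul_le_mul_of_nonneg_left h2 (Real.exp_pos _).le
      _ = (1 - r)⁻¹ * Real.exp (-(z*c).re * ξ) := mul_comm _ _
  refine ⟨hbound, ?_⟩
  -- summability of integrals of norms
  have hsum : Summable (fun k => ∫ ξ in Set.Ioi (0:ℝ), ‖F k ξ‖) := by
    set M : ℝ := ∫ ξ in Set.Ioi (0:ℝ), Real.exp (-(z*c).re * ξ) with hM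
    have hM0 : 0 ≤ M := integral_nonneg fun ξ => (Real.exp_pos _).le
    apply Summable.of_nonneg_of_le
      (fun k => integral_nonneg fun ξ => norm_nonneg _)
      (fun k => ?_) ((summable_geometric_of_lt_one hr0.le hr1).mul_right M)
    simp only [hFnorm]
    rw [MeasureTheory.integral_const_mul]
    apply mul_le_mul_of_nonneg_left _ (pow_nonneg hr0.le k)
    apply setIntegral_mono_on
    · exact ((cexp_laplace _ (ha k)).1.norm.congr (by
        filter_upwards with ξ
        rw [Complex.norm_exp]
        congr 1
        rw [mul_comm, Complex.re_ofReal_mul, Complex.neg_re]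
        ring))
    · exact exp_neg_integrableOn_Ioi 0 hz
    · exact measurableSet_Ioi
    · intro ξ hξ
      apply Real.exp_le_exp.2
      have h3 : ((z + (k:ℂ)) * c).re = (z * c).re + k * c.re := by
        rw [add_mul]; simp [Complex.add_re, Complex.mul_re]
      rw [h3, hcre]
      have hξ0 : (0:ℝ) < ξ := hξ
      nlinarith [mul_nonneg (mul_nonneg (Nat.cast_nonneg k : (0:ℝ) ≤ k) hcos.le) hξ0.le]
  have hswap := MeasureTheory.integral_tsum_of_summable_integral_norm
    (F := F) (μ := volume.restrict (Set.Ioi (0:ℝ))) hFint hsum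
  have hcongr : ∫ ξ in Set.Ioi (0:ℝ),
      Complex.exp (-z * ((ξ : ℂ) * c)) * (1 - w * Complex.exp (-((ξ:ℂ) * c)))⁻¹ =
      ∫ ξ in Set.Ioi (0:ℝ), ∑' k : ℕ, F k ξ := by
    apply setIntegral_congr_fun measurableSet_Ioi
    intro ξ hξ
    exact hpt ξ (le_of_lt hξ)
  rw [hcongr, ← hswap]
  simp only [hFval]
  rw [← tsum_mul_left]
  apply tsum_congr
  intro k
  have hk := hzk k
  field_simp
end

section
/- Let s ∈ ℂ with Re s < 0. (i) For every σ ∈ (0, −Re s) there exists A > 0 such that |1/(1 − e^{s−ζ})| ≤ A for all ζ ∈ ℂ with Re ζ ≥ −σ. (ii) For every δ > 0 there exists B > 0 such that |1/(1 − e^{s−ζ})| ≤ B·e^{Re ζ} for all ζ ∈ ℂ with dist(ζ, s + 2πiℤ) ≥ δ. -/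
open Complex Real

/-- Key compactness lemma: away from the poles `2πiℤ`, in the strip `|Re w| ≤ 1`,
the function `(1 - e^w)⁻¹` is bounded. -/
lemma stmt_12_aux (δ : ℝ) (hδ : 0 < δ) :
    ∃ C : ℝ, 0 < C ∧ ∀ w : ℂ, |w.re| ≤ 1 →
      (∀ k : ℤ, δ ≤ ‖w - 2 * (Real.pi : ℂ) * Complex.I * (k : ℂ)‖) →
      ‖(1 - Complex.exp w)⁻¹‖ ≤ C := by
  set δ' : ℝ := min δ 1 with hδ'def
  have hδ'pos : 0 < δ' := lt_min hδ one_pos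
  have hδ'le1 : δ' ≤ 1 := min_le_right _ _
  set K : Set ℂ := {u : ℂ | |u.re| ≤ 1 ∧ |u.im| ≤ Real.pi ∧ δ' ≤ ‖u‖} with hKdef
  have hKclosed : IsClosed K := by
    have h1 : IsClosed {u : ℂ | |u.re| ≤ 1} :=
      isClosed_le (continuous_abs.comp Complex.continuous_re) continuous_const
    have h2 : IsClosed {u : ℂ | |u.im| ≤ Real.pi} :=
      isClosed_le (continuous_abs.comp Complex.continuous_im) continuous_const
    have h3 : IsClosed {u : ℂ | δ' ≤ ‖u‖} :=
      isClosed_le continuous_const continuous_norm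
    have : K = {u : ℂ | |u.re| ≤ 1} ∩ ({u : ℂ | |u.im| ≤ Real.pi} ∩ {u : ℂ | δ' ≤ ‖u‖}) := by
      ext u; simp [hKdef, Set.mem_inter_iff, and_assoc]
    rw [this]; exact h1.inter (h2.inter h3)
  have hKsub : K ⊆ Metric.closedBall (0 : ℂ) (1 + Real.pi) := by
    intro u hu
    rw [Metric.mem_closedBall, dist_zero_right]
    calc ‖u‖ ≤ |u.re| + |u.im| := Complex.norm_le_abs_re_add_abs_im u
      _ ≤ 1 + Real.pi := add_le_add hu.1 hu.2.1
  have hKcompact : IsCompact K :=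
    IsCompact.of_isClosed_subset (isCompact_closedBall _ _) hKclosed hKsub
  have hKne : K.Nonempty := by
    refine ⟨1, ?_, ?_, ?_⟩
    · simp
    · simp [Real.pi_pos.le]
    · simp [hδ'le1]
  have hne : ∀ u ∈ K, (1 : ℂ) - Complex.exp u ≠ 0 := by
    intro u hu h0
    have hexp : Complex.exp u = 1 := by linear_combination -h0
    obtain ⟨n, hn⟩ := Complex.exp_eq_one_iff.mp hexp
    have him : u.im = n * (2 * Real.pi) := by
      rw [hn]; simp [Complex.mul_im, Complex.mul_re]
    have hn0 : n = 0 := by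
      by_contra hne0
      have h1 : (1 : ℝ) ≤ |(n : ℝ)| := by
        exact_mod_cast Int.one_le_abs (by exact_mod_cast hne0)
      have : 2 * Real.pi ≤ |u.im| := by
        rw [him, abs_mul, abs_of_pos (by positivity : (0:ℝ) < 2 * Real.pi)]
        nlinarith [Real.pi_pos]
      have := hu.2.1
      nlinarith [Real.pi_pos]
    have : u = 0 := by rw [hn, hn0]; simp
    rw [this] at hu
    have := hu.2.2
    simp at this
    linarith
  have hcont : ContinuousOn (fun u => ‖(1 - Complex.exp u)⁻¹‖) K := by
    apply ContinuousOn.norm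
    exact ContinuousOn.inv₀ ((continuous_const.sub Complex.continuous_exp).continuousOn) hne
  obtain ⟨u₀, hu₀, hmax⟩ := hKcompact.exists_isMaxOn hKne hcont
  refine ⟨max (‖(1 - Complex.exp u₀)⁻¹‖) 1, lt_of_lt_of_le one_pos (le_max_right _ _), ?_⟩
  intro w hwre hwdist
  set k : ℤ := round (w.im / (2 * Real.pi)) with hkdef
  set u : ℂ := w - 2 * (Real.pi : ℂ) * Complex.I * (k : ℂ) with hudef
  have hure : u.re = w.re := by
    simp [hudef, Complex.sub_re, Complex.mul_re, Complex.mul_im]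
  have huim : u.im = w.im - 2 * Real.pi * k := by
    simp [hudef, Complex.sub_im, Complex.mul_im, Complex.mul_re]
  have huimle : |u.im| ≤ Real.pi := by
    have h := abs_sub_round (w.im / (2 * Real.pi))
    have h2π : (0:ℝ) < 2 * Real.pi := by positivity
    have : u.im = (2 * Real.pi) * (w.im / (2 * Real.pi) - k) := by
      rw [huim]; field_simp
    rw [this, abs_mul, abs_of_pos h2π]
    calc 2 * Real.pi * |w.im / (2 * Real.pi) - ↑k| ≤ 2 * Real.pi * (1/2) :=
          mul_le_mul_of_nonneg_left h h2π.le
      _ = Real.pi := by ring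
  have huabs : δ' ≤ ‖u‖ := le_trans (min_le_left _ _) (hwdist k)
  have huK : u ∈ K := ⟨by rw [hure]; exact hwre, huimle, huabs⟩
  have hexpeq : Complex.exp w = Complex.exp u := by
    rw [hudef, Complex.exp_sub]
    have : Complex.exp (2 * (Real.pi : ℂ) * Complex.I * (k : ℂ)) = 1 := by
      rw [show (2 * (Real.pi : ℂ) * Complex.I * (k : ℂ)) = (k : ℂ) * (2 * Real.pi * Complex.I) by ring]
      exact Complex.exp_int_mul_two_pi_mul_I k
    rw [this, div_one]
  calc ‖(1 - Complex.exp w)⁻¹‖ = ‖(1 - Complex.exp u)⁻¹‖ := by rw [hexpeq]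
    _ ≤ ‖(1 - Complex.exp u₀)⁻¹‖ := hmax huK
    _ ≤ _ := le_max_left _ _

/-- Estimates for the Borel transform `(1 − e^{s−ζ})^{-1}` of Poincaré's example:
(i) it is bounded on each half-plane `{Re ζ ≥ −σ}` with `0 < σ < −Re s`;
(ii) away from the poles `s + 2πiℤ` it is bounded by `B·e^{Re ζ}`. -/
theorem stmt_12 (s : ℂ) (hs : s.re < 0) :
    (∀ σ : ℝ, σ ∈ Set.Ioo 0 (-s.re) →
      ∃ A : ℝ, 0 < A ∧ ∀ ζ : ℂ, -σ ≤ ζ.re → ‖(1 - Complex.exp (s - ζ))⁻¹‖ ≤ A) ∧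
      ∀ δ : ℝ, 0 < δ →
        ∃ B : ℝ, 0 < B ∧ ∀ ζ : ℂ,
          (∀ m : ℤ, δ ≤ dist ζ (s + ((2 * Real.pi : ℝ) : ℂ) * Complex.I * (m : ℂ))) →
          ‖(1 - Complex.exp (s - ζ))⁻¹‖ ≤ B * Real.exp ζ.re := by
  constructor
  · -- Part (i)
    intro σ hσ
    obtain ⟨hσ0, hσlt⟩ := hσ
    have hr : Real.exp (s.re + σ) < 1 := by
      rw [Real.exp_lt_one_iff]; linarith
    refine ⟨(1 - Real.exp (s.re + σ))⁻¹, inv_pos.mpr (by linarith), ?_⟩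
    intro ζ hζ
    have hren : (s - ζ).re = s.re - ζ.re := by simp [Complex.sub_re]
    have habs : ‖Complex.exp (s - ζ)‖ ≤ Real.exp (s.re + σ) := by
      rw [Complex.norm_exp, hren]
      exact Real.exp_le_exp.mpr (by linarith)
    have hlow : 1 - Real.exp (s.re + σ) ≤ ‖1 - Complex.exp (s - ζ)‖ := by
      calc 1 - Real.exp (s.re + σ) ≤ ‖(1:ℂ)‖ - ‖Complex.exp (s - ζ)‖ := by
            rw [norm_one]; linarith
        _ ≤ ‖1 - Complex.exp (s - ζ)‖ := norm_sub_norm_le _ _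
    rw [norm_inv]
    exact inv_anti₀ (by linarith) hlow
  · -- Part (ii)
    intro δ hδ
    obtain ⟨C, hC, hCbd⟩ := stmt_12_aux δ hδ
    set e1 : ℝ := 1 - Real.exp (-1) with he1def
    have he1 : 0 < e1 := by
      rw [he1def, sub_pos, Real.exp_lt_one_iff]; norm_num
    set B : ℝ := max (C * Real.exp (1 - s.re)) (Real.exp (-s.re) / e1) with hBdef
    have hB : 0 < B := lt_of_lt_of_le (by positivity : (0:ℝ) < C * Real.exp (1 - s.re)) (le_max_left _ _)
    refine ⟨B, hB, ?_⟩
    intro ζ hζ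
    set w : ℂ := s - ζ with hwdef
    have hwre : w.re = s.re - ζ.re := by simp [hwdef, Complex.sub_re]
    rcases le_or_gt |w.re| 1 with hcase | hcase
    · -- middle strip: use the compactness lemma
      have hdist : ∀ k : ℤ, δ ≤ ‖w - 2 * (Real.pi : ℂ) * Complex.I * (k : ℂ)‖ := by
        intro k
        have := hζ (-k)
        rw [Complex.dist_eq] at this
        calc δ ≤ ‖ζ - (s + ((2 * Real.pi : ℝ) : ℂ) * Complex.I * ((-k : ℤ) : ℂ))‖ := this
          _ = ‖w - 2 * (Real.pi : ℂ) * Complex.I * (k : ℂ)‖ := by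
              rw [show ζ - (s + ((2 * Real.pi : ℝ) : ℂ) * Complex.I * ((-k : ℤ) : ℂ)) =
                -(w - 2 * (Real.pi : ℂ) * Complex.I * (k : ℂ)) by push_cast; rw [hwdef]; ring]
              exact norm_neg _
      have h1 : ‖(1 - Complex.exp w)⁻¹‖ ≤ C := hCbd w hcase hdist
      have h2 : Real.exp (s.re - 1) ≤ Real.exp ζ.re := by
        apply Real.exp_le_exp.mpr
        have := abs_le.mp hcase
        rw [hwre] at this
        linarith [this.1]
      calc ‖(1 - Complex.exp w)⁻¹‖ ≤ C := h1
        _ = C * Real.exp (1 - s.re) * Real.exp (s.re - 1) := by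
            rw [mul_assoc, ← Real.exp_add]; norm_num
        _ ≤ C * Real.exp (1 - s.re) * Real.exp ζ.re := by
            apply mul_le_mul_of_nonneg_left h2 (by positivity)
        _ ≤ B * Real.exp ζ.re := by
            apply mul_le_mul_of_nonneg_right (le_max_left _ _) (Real.exp_pos _).le
    · rcases le_or_gt w.re 0 with hsgn | hsgn
      · -- w.re < -1 : |1 - e^w| ≥ 1 - e^{-1}
        have hwre1 : w.re < -1 := by
          rw [abs_of_nonpos hsgn] at hcase; linarith
        have habs : ‖Complex.exp w‖ ≤ Real.exp (-1) := by
          rw [Complex.norm_exp]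
          exact Real.exp_le_exp.mpr (by linarith)
        have hlow : e1 ≤ ‖1 - Complex.exp w‖ := by
          calc e1 ≤ ‖(1:ℂ)‖ - ‖Complex.exp w‖ := by
                rw [norm_one, he1def]; linarith
            _ ≤ ‖1 - Complex.exp w‖ := norm_sub_norm_le _ _
        have hinv : ‖(1 - Complex.exp w)⁻¹‖ ≤ e1⁻¹ := by
          rw [norm_inv]; exact inv_anti₀ he1 hlow
        have hζre : s.re + 1 < ζ.re := by rw [hwre] at hwre1; linarith
        have hexp : Real.exp (s.re + 1) ≤ Real.exp ζ.re := Real.exp_le_exp.mpr hζre.le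
        calc ‖(1 - Complex.exp w)⁻¹‖ ≤ e1⁻¹ := hinv
          _ ≤ Real.exp (-s.re) / e1 * Real.exp ζ.re := by
              rw [div_mul_eq_mul_div, inv_eq_one_div, div_le_div_iff₀ he1 he1, one_mul]
              have h1 : (1:ℝ) ≤ Real.exp (-s.re) * Real.exp ζ.re := by
                rw [← Real.exp_add]; exact Real.one_le_exp (by linarith)
              nlinarith
          _ ≤ B * Real.exp ζ.re := by
              apply mul_le_mul_of_nonneg_right (le_max_right _ _) (Real.exp_pos _).le
      · -- w.re > 1 : |1 - e^w| ≥ e^{Re w}(1 - e^{-1})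
        have hwre1 : 1 < w.re := by
          rw [abs_of_pos hsgn] at hcase; exact hcase
        have hlow : Real.exp w.re * e1 ≤ ‖1 - Complex.exp w‖ := by
          have h1 : Real.exp w.re * e1 = Real.exp w.re - Real.exp (w.re - 1) := by
            rw [he1def]; rw [mul_sub, mul_one, ← Real.exp_add]; ring_nf
          have h2 : Real.exp (w.re - 1) ≥ 1 := Real.one_le_exp (by linarith)
          calc Real.exp w.re * e1 = Real.exp w.re - Real.exp (w.re - 1) := h1
            _ ≤ Real.exp w.re - 1 := by linarith
            _ = ‖Complex.exp w‖ - ‖(1:ℂ)‖ := by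
                rw [norm_one, Complex.norm_exp]
            _ ≤ ‖Complex.exp w - 1‖ := norm_sub_norm_le _ _
            _ = ‖1 - Complex.exp w‖ := norm_sub_rev _ _
        have hpos : 0 < Real.exp w.re * e1 := by positivity
        have hinv : ‖(1 - Complex.exp w)⁻¹‖ ≤ (Real.exp w.re * e1)⁻¹ := by
          rw [norm_inv]; exact inv_anti₀ hpos hlow
        calc ‖(1 - Complex.exp w)⁻¹‖ ≤ (Real.exp w.re * e1)⁻¹ := hinv
          _ = (Real.exp (-s.re) / e1) * Real.exp ζ.re := by
              rw [mul_inv, ← Real.exp_neg, hwre]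
              rw [show -(s.re - ζ.re) = -s.re + ζ.re by ring, Real.exp_add]
              ring
          _ ≤ B * Real.exp ζ.re := by
              apply mul_le_mul_of_nonneg_right (le_max_right _ _) (Real.exp_pos _).le
end
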